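/- arXiv:2402.14716 — 7 statements merged into one kernel-verified Lean document; each statement's English description precedes it below -/
import Mathlib

section
/- The proper-proper observability Gramian Q_pp := ∫₀^∞ F_J(t)^T·M·P_p·M·F_J(t) dt is well defined and solves the projected continuous-time Lyapunov equation E^T·Q_pp·A + A^T·Q_pp·E = −P_r^T·M·P_p·M·P_r together with the projection condition Q_pp = P_l^T·Q_pp·P_l. -/
open MeasureTheory Matrix

/-- The matrix exponential of a real square matrix. -/
noncomputable def mexp {d : ℕ} (X : Matrix (Fin d) (Fin d) ℝ) : Matrix (Fin d) (Fin d) ℝ :=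
  NormedSpace.exp X

/-- The operator norm on real matrices, induced by the Euclidean (`ℓ²`) norms. -/
noncomputable def opNorm {d e : ℕ} (X : Matrix (Fin d) (Fin e) ℝ) : ℝ :=
  letI := Matrix.instL2OpNormedAddCommGroup (m := Fin d) (n := Fin e) (𝕜 := ℝ)
  ‖X‖

/-- Entrywise integral over `(0, ∞)` of a matrix-valued function. -/
noncomputable def matIntIoi {a b : Type*} (F : ℝ → Matrix a b ℝ) : Matrix a b ℝ :=
  Matrix.of fun i j => ∫ t in Set.Ioi (0:ℝ), F t i j

/-- Entrywise integrability over `(0, ∞)` of a matrix-valued function. -/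
def MatIntegrableIoi {a b : Type*} (F : ℝ → Matrix a b ℝ) : Prop :=
  ∀ i j, MeasureTheory.IntegrableOn (fun t => F t i j) (Set.Ioi 0)

/-- Kronecker product of two vectors in `ℝ^m`, an element of `ℝ^{m²}`. -/
def kron {m : ℕ} (a b : Fin m → ℝ) : Fin m × Fin m → ℝ := fun p => a p.1 * b p.2

/-- Vectorization of an `m × m` matrix as an element of `ℝ^{m²}`. -/
def vecm {m : ℕ} (X : Matrix (Fin m) (Fin m) ℝ) : Fin m × Fin m → ℝ := fun p => X p.1 p.2

/-- Squared Euclidean norm of a vector. -/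
def enormSq {ι : Type*} [Fintype ι] (v : ι → ℝ) : ℝ := ∑ i, (v i) ^ 2

/-- Euclidean inner product of two vectors. -/
def dotv {ι : Type*} [Fintype ι] (v w : ι → ℝ) : ℝ := ∑ i, v i * w i

namespace PPOG

lemma hasDerivAt_mexp_entry {d : ℕ} (J : Matrix (Fin d) (Fin d) ℝ) (t : ℝ) (a b : Fin d) :
    HasDerivAt (fun u : ℝ => mexp (u • J) a b) ((mexp (t • J) * J) a b) t := by
  letI : NormedRing (Matrix (Fin d) (Fin d) ℝ) := Matrix.linftyOpNormedRing
  letI : NormedAlgebra ℝ (Matrix (Fin d) (Fin d) ℝ) := Matrix.linftyOpNormedAlgebra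
  have h : HasDerivAt (fun u : ℝ => NormedSpace.exp (u • J))
      (NormedSpace.exp (t • J) * J) t := hasDerivAt_exp_smul_const J t
  let L : Matrix (Fin d) (Fin d) ℝ →L[ℝ] ℝ :=
    LinearMap.toContinuousLinearMap
      ((LinearMap.proj b).comp (LinearMap.proj a : _ →ₗ[ℝ] (Fin d → ℝ)))
  exact L.hasFDerivAt.comp_hasDerivAt t h

lemma continuous_mexp_entry {d : ℕ} (J : Matrix (Fin d) (Fin d) ℝ) (a b : Fin d) :
    Continuous fun t : ℝ => mexp (t • J) a b :=
  continuous_iff_continuousAt.2 fun t => (hasDerivAt_mexp_entry J t a b).continuousAt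

lemma euclid_coord_le {d : ℕ} (v : EuclideanSpace ℝ (Fin d)) (i : Fin d) : |v i| ≤ ‖v‖ := by
  have h := abs_real_inner_le_norm (EuclideanSpace.single i (1:ℝ)) v
  rw [EuclideanSpace.inner_single_left, EuclideanSpace.norm_single] at h
  simpa using h

lemma abs_entry_le_opNorm {d e : ℕ} (X : Matrix (Fin d) (Fin e) ℝ) (i : Fin d) (j : Fin e) :
    |X i j| ≤ opNorm X := by
  letI := Matrix.instL2OpNormedAddCommGroup (m := Fin d) (n := Fin e) (𝕜 := ℝ)
  have h := X.l2_opNorm_mulVec (EuclideanSpace.single j 1)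
  rw [EuclideanSpace.norm_single, norm_one, mul_one] at h
  have h2 := euclid_coord_le ((EuclideanSpace.equiv (Fin d) ℝ).symm (X.mulVec (EuclideanSpace.single j 1))) i
  change |X.mulVec (EuclideanSpace.single j 1) i| ≤ _ at h2
  have h3 : X.mulVec (EuclideanSpace.single j 1) i = X i j := by
    simp [Matrix.mulVec, dotProduct, EuclideanSpace.single_apply]
  rw [h3] at h2
  exact h2.trans h

/-- Triple-product entry formula. -/
lemma triple_apply {a b c d : Type*} [Fintype b] [Fintype c]
    (X : Matrix a b ℝ) (Y : Matrix b c ℝ) (Z : Matrix c d ℝ) (i : a) (j : d) :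
    (X * Y * Z) i j = ∑ k, ∑ l, X i k * (Y k l * Z l j) := by
  rw [Matrix.mul_apply]
  simp_rw [Matrix.mul_apply, Finset.sum_mul]
  rw [Finset.sum_comm]
  simp [mul_assoc]

/-- Sandwich entry formula. -/
lemma sandwich_apply {nf ni : ℕ} (P Q : Matrix (Fin nf ⊕ Fin ni) (Fin nf ⊕ Fin ni) ℝ)
    (X : Matrix (Fin nf) (Fin nf) ℝ) (p q : Fin nf ⊕ Fin ni) :
    (P * (fromBlocks X 0 0 0 : Matrix (Fin nf ⊕ Fin ni) (Fin nf ⊕ Fin ni) ℝ) * Q) p q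
      = ∑ a, ∑ b, P p (Sum.inl a) * (X a b * Q (Sum.inl b) q) := by
  rw [triple_apply]
  simp [Fintype.sum_sum_type]

/-- Exponential decay with rate `α`, together with continuity. -/
def DecayF (α : ℝ) (f : ℝ → ℝ) : Prop :=
  Continuous f ∧ ∃ c : ℝ, ∀ t : ℝ, 0 ≤ t → |f t| ≤ c * Real.exp (-α * t)

namespace DecayF

variable {α : ℝ} {f g : ℝ → ℝ}

lemma zero : DecayF α (fun _ => (0:ℝ)) :=
  ⟨continuous_const, 0, fun t _ => by simp⟩

lemma add (hf : DecayF α f) (hg : DecayF α g) : DecayF α (fun t => f t + g t) := by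
  obtain ⟨hfc, cf, hcf⟩ := hf; obtain ⟨hgc, cg, hcg⟩ := hg
  refine ⟨hfc.add hgc, cf + cg, fun t ht => ?_⟩
  calc |f t + g t| ≤ |f t| + |g t| := abs_add_le _ _
    _ ≤ cf * Real.exp (-α * t) + cg * Real.exp (-α * t) := add_le_add (hcf t ht) (hcg t ht)
    _ = (cf + cg) * Real.exp (-α * t) := by ring

lemma const_mul (hf : DecayF α f) (c : ℝ) : DecayF α (fun t => c * f t) := by
  obtain ⟨hfc, cf, hcf⟩ := hf
  refine ⟨continuous_const.mul hfc, |c| * cf, fun t ht => ?_⟩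
  rw [abs_mul, mul_assoc]
  exact mul_le_mul_of_nonneg_left (hcf t ht) (abs_nonneg c)

lemma mul_const (hf : DecayF α f) (c : ℝ) : DecayF α (fun t => f t * c) := by
  have := hf.const_mul c
  simpa [mul_comm] using this

lemma finsetSum {ι : Type*} {s : Finset ι} {F : ι → ℝ → ℝ}
    (h : ∀ i ∈ s, DecayF α (F i)) : DecayF α (fun t => ∑ i ∈ s, F i t) := by
  classical
  induction s using Finset.induction_on with
  | empty => simpa using (zero (α := α))
  | @insert a s' hx ih =>
    simp only [Finset.sum_insert hx]
    exact (h a (Finset.mem_insert_self a s')).add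
      (ih fun i hi => h i (Finset.mem_insert_of_mem hi))

lemma integrable_mul (hα : 0 < α) (hf : DecayF α f) (hg : DecayF α g) :
    IntegrableOn (fun t => f t * g t) (Set.Ioi (0:ℝ)) := by
  obtain ⟨hfc, cf, hcf⟩ := hf; obtain ⟨hgc, cg, hcg⟩ := hg
  have h2α : (0:ℝ) < 2 * α := by linarith
  refine Integrable.mono' ((exp_neg_integrableOn_Ioi 0 h2α).const_mul (cf * cg))
    ((hfc.mul hgc).aestronglyMeasurable.restrict) ?_
  filter_upwards [ae_restrict_mem measurableSet_Ioi] with t ht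
  have ht' : (0:ℝ) ≤ t := le_of_lt ht
  have h1 := hcf t ht'
  have h2 := hcg t ht'
  have hb : |f t * g t| ≤ (cf * Real.exp (-α * t)) * (cg * Real.exp (-α * t)) := by
    rw [abs_mul]
    exact mul_le_mul h1 h2 (abs_nonneg _) ((abs_nonneg _).trans h1)
  have he : (cf * Real.exp (-α * t)) * (cg * Real.exp (-α * t))
      = cf * cg * Real.exp (-(2 * α) * t) := by
    rw [mul_mul_mul_comm, ← Real.exp_add]
    congr 1
    ring
  calc ‖f t * g t‖ = |f t * g t| := rfl
    _ ≤ cf * cg * Real.exp (-(2 * α) * t) := by rw [← he]; exact hb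

lemma tendsto_exp_rate (hα : 0 < α) (c : ℝ) :
    Filter.Tendsto (fun t : ℝ => c * Real.exp (-α * t)) Filter.atTop (nhds 0) := by
  have h1 : Filter.Tendsto (fun t : ℝ => -α * t) Filter.atTop Filter.atBot :=
    Filter.Tendsto.const_mul_atTop_of_neg (neg_neg_iff_pos.2 hα) Filter.tendsto_id
  have h2 := Real.tendsto_exp_atBot.comp h1
  simpa using h2.const_mul c

lemma tendsto_mul (hα : 0 < α) (hf : DecayF α f) (hg : DecayF α g) :
    Filter.Tendsto (fun t => f t * g t) Filter.atTop (nhds 0) := by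
  obtain ⟨hfc, cf, hcf⟩ := hf; obtain ⟨hgc, cg, hcg⟩ := hg
  have h2α : (0:ℝ) < 2 * α := by linarith
  refine squeeze_zero_norm' ?_ (tendsto_exp_rate h2α (cf * cg))
  filter_upwards [Filter.eventually_ge_atTop (0:ℝ)] with t ht
  have h1 := hcf t ht
  have h2 := hcg t ht
  have hb : |f t * g t| ≤ (cf * Real.exp (-α * t)) * (cg * Real.exp (-α * t)) := by
    rw [abs_mul]
    exact mul_le_mul h1 h2 (abs_nonneg _) ((abs_nonneg _).trans h1)
  have he : (cf * Real.exp (-α * t)) * (cg * Real.exp (-α * t))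
      = cf * cg * Real.exp (-(2 * α) * t) := by
    rw [mul_mul_mul_comm, ← Real.exp_add]
    congr 1
    ring
  calc ‖f t * g t‖ = |f t * g t| := rfl
    _ ≤ cf * cg * Real.exp (-(2 * α) * t) := by rw [← he]; exact hb

end DecayF


section
variable {nf ni : ℕ} {J : Matrix (Fin nf) (Fin nf) ℝ} {C α : ℝ}

lemma dec_mexp (hJ : ∀ t : ℝ, 0 ≤ t → opNorm (mexp (t • J)) ≤ C * Real.exp (-α * t))
    (a b : Fin nf) : DecayF α (fun t => mexp (t • J) a b) :=
  ⟨continuous_mexp_entry J a b, C, fun t ht => (abs_entry_le_opNorm _ a b).trans (hJ t ht)⟩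

lemma dec_mul_right {φ : ℝ → Matrix (Fin nf) (Fin nf) ℝ}
    (hφ : ∀ a b, DecayF α (fun t => φ t a b)) (X : Matrix (Fin nf) (Fin nf) ℝ) (a b : Fin nf) :
    DecayF α (fun t => (φ t * X) a b) := by
  simp only [Matrix.mul_apply]
  exact DecayF.finsetSum fun c _ => (hφ a c).mul_const (X c b)

lemma dec_sandwich {φ : ℝ → Matrix (Fin nf) (Fin nf) ℝ}
    (hφ : ∀ a b, DecayF α (fun t => φ t a b))
    (P Q : Matrix (Fin nf ⊕ Fin ni) (Fin nf ⊕ Fin ni) ℝ) (p q : Fin nf ⊕ Fin ni) :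
    DecayF α (fun t =>
      (P * (fromBlocks (φ t) 0 0 0 : Matrix (Fin nf ⊕ Fin ni) (Fin nf ⊕ Fin ni) ℝ) * Q) p q) := by
  simp only [sandwich_apply]
  exact DecayF.finsetSum fun a _ => DecayF.finsetSum fun b _ =>
    ((hφ a b).mul_const _).const_mul _

lemma hasDerivAt_sandwich (P Q : Matrix (Fin nf ⊕ Fin ni) (Fin nf ⊕ Fin ni) ℝ)
    (p q : Fin nf ⊕ Fin ni) (t : ℝ) :
    HasDerivAt (fun u =>
        (P * (fromBlocks (mexp (u • J)) 0 0 0 : Matrix (Fin nf ⊕ Fin ni) (Fin nf ⊕ Fin ni) ℝ)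
          * Q) p q)
      ((P * (fromBlocks (mexp (t • J) * J) 0 0 0 : Matrix (Fin nf ⊕ Fin ni) (Fin nf ⊕ Fin ni) ℝ)
          * Q) p q) t := by
  simp only [sandwich_apply]
  exact HasDerivAt.fun_sum fun a _ => HasDerivAt.fun_sum fun b _ =>
    (((hasDerivAt_mexp_entry J t a b).mul_const _).const_mul _)

end

lemma matIntIoi_triple {S : Type*} [Fintype S] {F : ℝ → Matrix S S ℝ}
    (hF : MatIntegrableIoi F) (P Q : Matrix S S ℝ) (i j : S) :
    (P * matIntIoi F * Q) i j = ∫ t in Set.Ioi (0:ℝ), (P * F t * Q) i j := by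
  have hInt : ∀ (k l : S), IntegrableOn (fun t => P i k * (F t k l * Q l j)) (Set.Ioi (0:ℝ)) :=
    fun k l => (((hF k l).mul_const (Q l j)).const_mul (P i k))
  calc (P * matIntIoi F * Q) i j
      = ∑ k, ∑ l, P i k * ((∫ t in Set.Ioi (0:ℝ), F t k l) * Q l j) := by
        rw [triple_apply]; rfl
    _ = ∑ k, ∑ l, ∫ t in Set.Ioi (0:ℝ), P i k * (F t k l * Q l j) := by
        refine Finset.sum_congr rfl fun k _ => Finset.sum_congr rfl fun l _ => ?_
        rw [MeasureTheory.integral_const_mul, MeasureTheory.integral_mul_const]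
    _ = ∫ t in Set.Ioi (0:ℝ), ∑ k, ∑ l, P i k * (F t k l * Q l j) := by
        rw [MeasureTheory.integral_finset_sum _
          (fun k _ => MeasureTheory.integrable_finset_sum _ (fun l _ => hInt k l))]
        exact Finset.sum_congr rfl fun k _ =>
          (MeasureTheory.integral_finset_sum _ (fun l _ => hInt k l)).symm
    _ = ∫ t in Set.Ioi (0:ℝ), (P * F t * Q) i j := by
        refine MeasureTheory.integral_congr_ae (Filter.Eventually.of_forall fun t => ?_)
        simp only []
        rw [triple_apply]


lemma mexp_zero {d : ℕ} : mexp (0 : Matrix (Fin d) (Fin d) ℝ) = 1 := by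
  rw [mexp]; exact NormedSpace.exp_zero (𝔸 := Matrix (Fin d) (Fin d) ℝ)

lemma integrableOn_quad {S : Type*} [Fintype S] {α : ℝ} (hα : 0 < α)
    {X Y : ℝ → Matrix S S ℝ} (K : Matrix S S ℝ)
    (hX : ∀ p q, DecayF α (fun t => X t p q)) (hY : ∀ p q, DecayF α (fun t => Y t p q))
    (i j : S) :
    IntegrableOn (fun t => ((X t)ᵀ * K * Y t) i j) (Set.Ioi (0:ℝ)) := by
  have e : (fun t => ((X t)ᵀ * K * Y t) i j)
      = fun t => ∑ k, ∑ l, X t k i * (K k l * Y t l j) := by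
    funext t; rw [triple_apply]; simp [Matrix.transpose_apply]
  rw [e]
  exact MeasureTheory.integrable_finset_sum _ fun k _ =>
    MeasureTheory.integrable_finset_sum _ fun l _ =>
      DecayF.integrable_mul hα (hX k i) ((hY l j).const_mul (K k l))

lemma tendsto_quad {S : Type*} [Fintype S] {α : ℝ} (hα : 0 < α)
    {X Y : ℝ → Matrix S S ℝ} (K : Matrix S S ℝ)
    (hX : ∀ p q, DecayF α (fun t => X t p q)) (hY : ∀ p q, DecayF α (fun t => Y t p q))
    (i j : S) :
    Filter.Tendsto (fun t => ((X t)ᵀ * K * Y t) i j) Filter.atTop (nhds 0) := by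
  have e : (fun t => ((X t)ᵀ * K * Y t) i j)
      = fun t => ∑ k, ∑ l, X t k i * (K k l * Y t l j) := by
    funext t; rw [triple_apply]; simp [Matrix.transpose_apply]
  rw [e]
  have h : Filter.Tendsto (fun t => ∑ k, ∑ l, X t k i * (K k l * Y t l j)) Filter.atTop
      (nhds (∑ _k : S, ∑ _l : S, (0:ℝ))) :=
    tendsto_finset_sum _ fun k _ => tendsto_finset_sum _ fun l _ =>
      DecayF.tendsto_mul hα (hX k i) ((hY l j).const_mul (K k l))
  simpa using h

lemma key_lyap {nf ni : ℕ} {J : Matrix (Fin nf) (Fin nf) ℝ} {C α : ℝ} (hα : 0 < α)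
    (hJ : ∀ t : ℝ, 0 ≤ t → opNorm (mexp (t • J)) ≤ C * Real.exp (-α * t))
    (Tinv T K : Matrix (Fin nf ⊕ Fin ni) (Fin nf ⊕ Fin ni) ℝ)
    (G G' : ℝ → Matrix (Fin nf ⊕ Fin ni) (Fin nf ⊕ Fin ni) ℝ)
    (hG : ∀ t, G t = Tinv * fromBlocks (mexp (t • J)) 0 0 0 * T)
    (hG' : ∀ t, G' t = Tinv * fromBlocks (mexp (t • J) * J) 0 0 0 * T)
    (i j : Fin nf ⊕ Fin ni) :
    ∫ t in Set.Ioi (0:ℝ), ((G' t)ᵀ * K * G t + (G t)ᵀ * K * G' t) i j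
      = -(((Tinv * (fromBlocks 1 0 0 0 : Matrix (Fin nf ⊕ Fin ni) (Fin nf ⊕ Fin ni) ℝ) * T)ᵀ
          * K * (Tinv * (fromBlocks 1 0 0 0 : Matrix (Fin nf ⊕ Fin ni) (Fin nf ⊕ Fin ni) ℝ) * T))
          i j) := by
  have hDG : ∀ p q, DecayF α (fun t => G t p q) := by
    intro p q; simp only [hG]; exact dec_sandwich (dec_mexp hJ) Tinv T p q
  have hDG' : ∀ p q, DecayF α (fun t => G' t p q) := by
    intro p q; simp only [hG']
    exact dec_sandwich (dec_mul_right (dec_mexp hJ) J) Tinv T p q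
  have hder : ∀ (p q : Fin nf ⊕ Fin ni) (t : ℝ), HasDerivAt (fun u => G u p q) (G' t p q) t := by
    intro p q t; simp only [hG, hG']; exact hasDerivAt_sandwich Tinv T p q t
  have hderiv : ∀ t ∈ Set.Ici (0:ℝ), HasDerivAt (fun u => ((G u)ᵀ * K * G u) i j)
      (((G' t)ᵀ * K * G t + (G t)ᵀ * K * G' t) i j) t := by
    intro t _
    have h1 : HasDerivAt (fun u => ∑ k, ∑ l, G u k i * (K k l * G u l j))
        (∑ k, ∑ l, (G' t k i * (K k l * G t l j) + G t k i * (K k l * G' t l j))) t :=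
      HasDerivAt.fun_sum fun k _ => HasDerivAt.fun_sum fun l _ =>
        (hder k i t).mul ((hder l j t).const_mul (K k l))
    have e1 : (fun u => ((G u)ᵀ * K * G u) i j)
        = fun u => ∑ k, ∑ l, G u k i * (K k l * G u l j) := by
      funext u; rw [triple_apply]; simp [Matrix.transpose_apply]
    have e2 : (((G' t)ᵀ * K * G t + (G t)ᵀ * K * G' t) i j)
        = ∑ k, ∑ l, (G' t k i * (K k l * G t l j) + G t k i * (K k l * G' t l j)) := by
      rw [Matrix.add_apply, triple_apply, triple_apply, ← Finset.sum_add_distrib]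
      refine Finset.sum_congr rfl fun k _ => ?_
      rw [← Finset.sum_add_distrib]
      refine Finset.sum_congr rfl fun l _ => ?_
      simp [Matrix.transpose_apply]
    rw [e1, e2]; exact h1
  have hint : IntegrableOn (fun t => ((G' t)ᵀ * K * G t + (G t)ᵀ * K * G' t) i j)
      (Set.Ioi (0:ℝ)) := by
    have h1 := integrableOn_quad hα K hDG' hDG i j
    have h2 := integrableOn_quad hα K hDG hDG' i j
    have e : (fun t => ((G' t)ᵀ * K * G t + (G t)ᵀ * K * G' t) i j)
        = fun t => ((G' t)ᵀ * K * G t) i j + ((G t)ᵀ * K * G' t) i j := by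
      funext t; rw [Matrix.add_apply]
    rw [e]; exact h1.add h2
  have htend := tendsto_quad hα K hDG hDG i j
  have hFTC := MeasureTheory.integral_Ioi_of_hasDerivAt_of_tendsto' hderiv hint htend
  rw [hFTC, zero_sub]
  have hG0 : G 0 = Tinv * (fromBlocks 1 0 0 0 : Matrix (Fin nf ⊕ Fin ni) (Fin nf ⊕ Fin ni) ℝ) * T := by
    rw [hG 0, zero_smul, mexp_zero]
  rw [hG0]

end PPOG

/-- The proper-proper observability Gramian
`Q_pp = ∫₀^∞ F_J(t)ᵀ·M·P_p·M·F_J(t) dt` is well defined and solves the projected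
continuous-time Lyapunov equation `Eᵀ·Q_pp·A + Aᵀ·Q_pp·E = −P_rᵀ·M·P_p·M·P_r` together with
`Q_pp = P_lᵀ·Q_pp·P_l`. -/
theorem proper_proper_observability_gramian
    {nf ni m : ℕ} (hm : 0 < m) (ν : ℕ) (hν : 0 < ν)
    -- Weierstraß canonical form data for the full-order system
    (W T Winv Tinv : Matrix (Fin nf ⊕ Fin ni) (Fin nf ⊕ Fin ni) ℝ)
    (hW : W * Winv = 1) (hW' : Winv * W = 1)
    (hT : T * Tinv = 1) (hT' : Tinv * T = 1)
    (J : Matrix (Fin nf) (Fin nf) ℝ) (N : Matrix (Fin ni) (Fin ni) ℝ) (hN : N ^ ν = 0)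
    (C α : ℝ) (hC : 0 < C) (hα : 0 < α)
    (hJ : ∀ t : ℝ, 0 ≤ t → opNorm (mexp (t • J)) ≤ C * Real.exp (-α * t))
    (E A : Matrix (Fin nf ⊕ Fin ni) (Fin nf ⊕ Fin ni) ℝ)
    (hE : E = W * fromBlocks 1 0 0 N * T)
    (hA : A = W * fromBlocks J 0 0 1 * T)
    (B : Matrix (Fin nf ⊕ Fin ni) (Fin m) ℝ)
    (M : Matrix (Fin nf ⊕ Fin ni) (Fin nf ⊕ Fin ni) ℝ) (hM : M.IsSymm)
    -- spectral projectors
    (Pr Pl : Matrix (Fin nf ⊕ Fin ni) (Fin nf ⊕ Fin ni) ℝ)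
    (hPr : Pr = Tinv * fromBlocks 1 0 0 0 * T)
    (hPl : Pl = W * fromBlocks 1 0 0 0 * Winv)
    -- fundamental solution matrices
    (FJ : ℝ → Matrix (Fin nf ⊕ Fin ni) (Fin nf ⊕ Fin ni) ℝ)
    (hFJ : ∀ t : ℝ, FJ t = Tinv * fromBlocks (mexp (t • J)) 0 0 0 * Winv)
    (FN : ℕ → Matrix (Fin nf ⊕ Fin ni) (Fin nf ⊕ Fin ni) ℝ)
    (hFN : ∀ k : ℕ, FN k = Tinv * fromBlocks 0 0 0 (-(N ^ k)) * Winv)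
    -- proper and improper controllability Gramians
    (Pp : Matrix (Fin nf ⊕ Fin ni) (Fin nf ⊕ Fin ni) ℝ)
    (hPp : Pp = matIntIoi fun t => FJ t * B * Bᵀ * (FJ t)ᵀ)
    (Pimp : Matrix (Fin nf ⊕ Fin ni) (Fin nf ⊕ Fin ni) ℝ)
    (hPimp : Pimp = ∑ k ∈ Finset.range ν, FN k * B * Bᵀ * (FN k)ᵀ)
    -- the proper-proper observability Gramian
    (Qpp : Matrix (Fin nf ⊕ Fin ni) (Fin nf ⊕ Fin ni) ℝ)
    (hQpp : Qpp = matIntIoi fun t => (FJ t)ᵀ * M * Pp * M * FJ t) :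
    MatIntegrableIoi (fun t => (FJ t)ᵀ * M * Pp * M * FJ t) ∧
      Eᵀ * Qpp * A + Aᵀ * Qpp * E = -(Prᵀ * M * Pp * M * Pr) ∧
      Qpp = Plᵀ * Qpp * Pl := by
  classical
  -- decay of the entries of FJ
  have hDecFJ : ∀ p q, PPOG.DecayF α (fun t => FJ t p q) := by
    intro p q; simp only [hFJ]
    exact PPOG.dec_sandwich (PPOG.dec_mexp hJ) Tinv Winv p q
  -- rewrite the integrand in `Xᵀ * K * Y` shape
  have hassoc : ∀ t : ℝ, (FJ t)ᵀ * M * Pp * M * FJ t = (FJ t)ᵀ * (M * Pp * M) * FJ t := by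
    intro t; simp only [Matrix.mul_assoc]
  -- Part 1: integrability
  have hFint : MatIntegrableIoi (fun t => (FJ t)ᵀ * M * Pp * M * FJ t) := by
    intro i j
    have e : (fun t => ((FJ t)ᵀ * M * Pp * M * FJ t) i j)
        = fun t => ((FJ t)ᵀ * (M * Pp * M) * FJ t) i j := by
      funext t; rw [hassoc t]
    rw [e]
    exact PPOG.integrableOn_quad hα (M * Pp * M) hDecFJ hDecFJ i j
  -- algebraic identities
  have hGE : ∀ t : ℝ, FJ t * E = Tinv * fromBlocks (mexp (t • J)) 0 0 0 * T := by
    intro t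
    rw [hFJ, hE]
    simp only [Matrix.mul_assoc]
    rw [← Matrix.mul_assoc Winv W, hW', Matrix.one_mul,
      ← Matrix.mul_assoc (fromBlocks (mexp (t • J)) 0 0 0) (fromBlocks 1 0 0 N) T,
      Matrix.fromBlocks_multiply]
    simp [Matrix.mul_assoc]
  have hGA : ∀ t : ℝ, FJ t * A = Tinv * fromBlocks (mexp (t • J) * J) 0 0 0 * T := by
    intro t
    rw [hFJ, hA]
    simp only [Matrix.mul_assoc]
    rw [← Matrix.mul_assoc Winv W, hW', Matrix.one_mul,
      ← Matrix.mul_assoc (fromBlocks (mexp (t • J)) 0 0 0) (fromBlocks J 0 0 1) T,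
      Matrix.fromBlocks_multiply]
    simp [Matrix.mul_assoc]
  have hFJPl : ∀ t : ℝ, FJ t * Pl = FJ t := by
    intro t
    rw [hFJ, hPl]
    simp only [Matrix.mul_assoc]
    rw [← Matrix.mul_assoc Winv W, hW', Matrix.one_mul,
      ← Matrix.mul_assoc (fromBlocks (mexp (t • J)) 0 0 0) (fromBlocks 1 0 0 0) Winv,
      Matrix.fromBlocks_multiply]
    simp [Matrix.mul_assoc]
  refine ⟨hFint, ?_, ?_⟩
  · -- the projected Lyapunov equation
    ext i j
    have e1 : (Eᵀ * Qpp * A) i j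
        = ∫ t in Set.Ioi (0:ℝ), (Eᵀ * ((FJ t)ᵀ * M * Pp * M * FJ t) * A) i j := by
      rw [hQpp]; exact PPOG.matIntIoi_triple hFint Eᵀ A i j
    have e2 : (Aᵀ * Qpp * E) i j
        = ∫ t in Set.Ioi (0:ℝ), (Aᵀ * ((FJ t)ᵀ * M * Pp * M * FJ t) * E) i j := by
      rw [hQpp]; exact PPOG.matIntIoi_triple hFint Aᵀ E i j
    have hr1 : ∀ t : ℝ, Eᵀ * ((FJ t)ᵀ * M * Pp * M * FJ t) * A
        = (FJ t * E)ᵀ * (M * Pp * M) * (FJ t * A) := by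
      intro t; simp only [Matrix.transpose_mul, Matrix.mul_assoc]
    have hr2 : ∀ t : ℝ, Aᵀ * ((FJ t)ᵀ * M * Pp * M * FJ t) * E
        = (FJ t * A)ᵀ * (M * Pp * M) * (FJ t * E) := by
      intro t; simp only [Matrix.transpose_mul, Matrix.mul_assoc]
    have hDecGE : ∀ p q, PPOG.DecayF α (fun t => (FJ t * E) p q) := by
      intro p q; simp only [hGE]; exact PPOG.dec_sandwich (PPOG.dec_mexp hJ) Tinv T p q
    have hDecGA : ∀ p q, PPOG.DecayF α (fun t => (FJ t * A) p q) := by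
      intro p q; simp only [hGA]
      exact PPOG.dec_sandwich (PPOG.dec_mul_right (PPOG.dec_mexp hJ) J) Tinv T p q
    have hint1 := PPOG.integrableOn_quad hα (M * Pp * M) hDecGE hDecGA i j
    have hint2 := PPOG.integrableOn_quad hα (M * Pp * M) hDecGA hDecGE i j
    have hkey := PPOG.key_lyap hα hJ Tinv T (M * Pp * M)
        (fun t => FJ t * E) (fun t => FJ t * A) hGE hGA i j
    rw [Matrix.add_apply, e1, e2]
    simp only [hr1, hr2]
    rw [add_comm, ← MeasureTheory.integral_add hint2 hint1]
    have ecomb : (fun t => ((FJ t * A)ᵀ * (M * Pp * M) * (FJ t * E)) i j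
          + ((FJ t * E)ᵀ * (M * Pp * M) * (FJ t * A)) i j)
        = fun t => (((FJ t * A)ᵀ * (M * Pp * M) * (FJ t * E)
          + (FJ t * E)ᵀ * (M * Pp * M) * (FJ t * A)) i j) := by
      funext t; rw [Matrix.add_apply]
    rw [ecomb, hkey, hPr]
    simp [Matrix.neg_apply, Matrix.mul_assoc]
  · -- the projection property
    ext i j
    have e3 : (Plᵀ * Qpp * Pl) i j
        = ∫ t in Set.Ioi (0:ℝ), (Plᵀ * ((FJ t)ᵀ * M * Pp * M * FJ t) * Pl) i j := by
      rw [hQpp]; exact PPOG.matIntIoi_triple hFint Plᵀ Pl i j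
    have hr : ∀ t : ℝ, Plᵀ * ((FJ t)ᵀ * M * Pp * M * FJ t) * Pl
        = (FJ t)ᵀ * M * Pp * M * FJ t := by
      intro t
      have h1 : Plᵀ * ((FJ t)ᵀ * M * Pp * M * FJ t) * Pl
          = (FJ t * Pl)ᵀ * M * (Pp * (M * (FJ t * Pl))) := by
        simp only [Matrix.transpose_mul, Matrix.mul_assoc]
      rw [h1, hFJPl t]
      simp only [Matrix.mul_assoc]
    rw [e3, hQpp]
    simp only [matIntIoi, Matrix.of_apply]
    simp only [hr]
end

section
/- The improper-proper observability Gramian Q_ip := ∫₀^∞ F_J(t)^T·M·P_i·M·F_J(t) dt is well defined and solves the projected continuous-time Lyapunov equation E^T·Q_ip·A + A^T·Q_ip·E = −P_r^T·M·P_i·M·P_r together with the projection condition Q_ip = P_l^T·Q_ip·P_l. -/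
open MeasureTheory Matrix

section ExpHelpers
attribute [local instance] Matrix.linftyOpNormedRing Matrix.linftyOpNormedAlgebra

lemma mexp_entry_hasDerivAt {d : ℕ} (J : Matrix (Fin d) (Fin d) ℝ) (t : ℝ) (a b : Fin d) :
    HasDerivAt (fun s : ℝ => mexp (s • J) a b) ((mexp (t • J) * J) a b) t := by
  have h : HasDerivAt (fun s : ℝ => NormedSpace.exp (s • J))
      (NormedSpace.exp (t • J) * J) t := hasDerivAt_exp_smul_const J t
  let eval : Matrix (Fin d) (Fin d) ℝ →ₗ[ℝ] ℝ :=
    { toFun := fun X => X a b, map_add' := by intros; rfl, map_smul' := by intros; rfl }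
  exact (LinearMap.toContinuousLinearMap eval).hasFDerivAt.comp_hasDerivAt t h

lemma mexp_zero_smul {d : ℕ} (J : Matrix (Fin d) (Fin d) ℝ) : mexp ((0:ℝ) • J) = 1 := by
  rw [zero_smul]; exact NormedSpace.exp_zero
end ExpHelpers

lemma mexp_entry_continuous {d : ℕ} (J : Matrix (Fin d) (Fin d) ℝ) (a b : Fin d) :
    Continuous (fun s : ℝ => mexp (s • J) a b) :=
  continuous_iff_continuousAt.2 fun t => (mexp_entry_hasDerivAt J t a b).continuousAt

lemma abs_entry_le_opNorm {d e : ℕ} (X : Matrix (Fin d) (Fin e) ℝ) (i : Fin d) (j : Fin e) :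
    |X i j| ≤ opNorm X := by
  letI := Matrix.instL2OpNormedAddCommGroup (m := Fin d) (n := Fin e) (𝕜 := ℝ)
  have h := Matrix.l2_opNorm_mulVec X (EuclideanSpace.single j (1:ℝ))
  rw [EuclideanSpace.norm_single, norm_one, mul_one] at h
  set w := (EuclideanSpace.equiv (Fin d) ℝ).symm (X *ᵥ (EuclideanSpace.single j (1:ℝ))) with hw
  have hwi : w i = X i j := by
    simp [hw, Matrix.mulVec, dotProduct, EuclideanSpace.single_apply, mul_comm]
  have h2 : |w i| ≤ ‖w‖ := by
    rw [EuclideanSpace.norm_eq]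
    have : |w i| = Real.sqrt (‖w i‖^2) := by rw [Real.sqrt_sq_eq_abs]; simp
    rw [this]
    apply Real.sqrt_le_sqrt
    exact Finset.single_le_sum (f := fun k => ‖w k‖^2) (fun k _ => by positivity) (Finset.mem_univ i)
  rw [hwi] at h2
  exact h2.trans h

/-- total absolute entry sum -/
noncomputable def eb {a b : Type*} [Fintype a] [Fintype b] (X : Matrix a b ℝ) : ℝ :=
  ∑ i, ∑ j, |X i j|

lemma eb_nonneg {a b : Type*} [Fintype a] [Fintype b] (X : Matrix a b ℝ) : 0 ≤ eb X := by
  apply Finset.sum_nonneg; intro i _; apply Finset.sum_nonneg; intro j _; exact abs_nonneg _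

lemma row_abs_le_eb {a b : Type*} [Fintype a] [Fintype b] (X : Matrix a b ℝ) (i : a) :
    ∑ j, |X i j| ≤ eb X :=
  Finset.single_le_sum (f := fun i => ∑ j, |X i j|)
    (fun k _ => Finset.sum_nonneg fun j _ => abs_nonneg _) (Finset.mem_univ i)

lemma col_abs_le_eb {a b : Type*} [Fintype a] [Fintype b] (X : Matrix a b ℝ) (j : b) :
    ∑ i, |X i j| ≤ eb X := by
  rw [show eb X = ∑ j', ∑ i, |X i j'| from Finset.sum_comm]
  exact Finset.single_le_sum (f := fun j' => ∑ i, |X i j'|)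
    (fun k _ => Finset.sum_nonneg fun i _ => abs_nonneg _) (Finset.mem_univ j)

lemma entry_mul3_le {a b c d : Type*} [Fintype b] [Fintype c]
    (U : Matrix a b ℝ) (P : Matrix b c ℝ) (V : Matrix c d ℝ) (i : a) (j : d) :
    |(U * P * V) i j| ≤ ∑ l, ∑ k, |U i k| * |P k l| * |V l j| := by
  have e1 : (U * P * V) i j = ∑ l, (∑ k, U i k * P k l) * V l j := by
    simp [Matrix.mul_apply]
  rw [e1]
  refine (Finset.abs_sum_le_sum_abs _ _).trans ?_
  apply Finset.sum_le_sum; intro l _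
  rw [abs_mul]
  calc |∑ k, U i k * P k l| * |V l j| ≤ (∑ k, |U i k * P k l|) * |V l j| :=
        mul_le_mul_of_nonneg_right (Finset.abs_sum_le_sum_abs _ _) (abs_nonneg _)
    _ = ∑ k, |U i k| * |P k l| * |V l j| := by rw [Finset.sum_mul]; simp [abs_mul]

lemma entry_mul3_le_mid {a b c d : Type*} [Fintype a] [Fintype b] [Fintype c] [Fintype d]
    (U : Matrix a b ℝ) (P : Matrix b c ℝ) (V : Matrix c d ℝ) {cP : ℝ} (hc : 0 ≤ cP)
    (hP : ∀ k l, |P k l| ≤ cP) (i : a) (j : d) :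
    |(U * P * V) i j| ≤ eb U * cP * eb V := by
  refine (entry_mul3_le U P V i j).trans ?_
  calc ∑ l, ∑ k, |U i k| * |P k l| * |V l j|
      ≤ ∑ l, ∑ k, |U i k| * cP * |V l j| := by
        apply Finset.sum_le_sum; intro l _; apply Finset.sum_le_sum; intro k _
        exact mul_le_mul_of_nonneg_right
          (mul_le_mul_of_nonneg_left (hP k l) (abs_nonneg _)) (abs_nonneg _)
    _ = (∑ k, |U i k|) * cP * (∑ l, |V l j|) := by
        simp only [Finset.sum_mul, Finset.mul_sum]
    _ ≤ eb U * cP * eb V := by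
        apply mul_le_mul
        · exact mul_le_mul_of_nonneg_right (row_abs_le_eb U i) hc
        · exact col_abs_le_eb V j
        · exact Finset.sum_nonneg fun l _ => abs_nonneg _
        · exact mul_nonneg (eb_nonneg U) hc

lemma entry_mul3_le_out {a b c d : Type*} [Fintype a] [Fintype b] [Fintype c] [Fintype d]
    (U : Matrix a b ℝ) (P : Matrix b c ℝ) (V : Matrix c d ℝ) {cU cV : ℝ}
    (hcU : 0 ≤ cU) (hcV : 0 ≤ cV)
    (hU : ∀ i k, |U i k| ≤ cU) (hV : ∀ l j, |V l j| ≤ cV) (i : a) (j : d) :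
    |(U * P * V) i j| ≤ cU * eb P * cV := by
  refine (entry_mul3_le U P V i j).trans ?_
  calc ∑ l, ∑ k, |U i k| * |P k l| * |V l j|
      ≤ ∑ l, ∑ k, cU * |P k l| * cV := by
        apply Finset.sum_le_sum; intro l _; apply Finset.sum_le_sum; intro k _
        apply mul_le_mul (mul_le_mul (hU i k) le_rfl (abs_nonneg _) hcU) (hV l j)
          (abs_nonneg _) (by positivity)
    _ = cU * (∑ k, ∑ l, |P k l|) * cV := by
        rw [Finset.sum_comm]
        simp only [Finset.sum_mul, Finset.mul_sum]
    _ = cU * eb P * cV := rfl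

lemma hasDerivAt_entry_mul3 {a b c d : Type*} [Fintype b] [Fintype c]
    (U : Matrix a b ℝ) (V : Matrix c d ℝ) (P P' : ℝ → Matrix b c ℝ) (t : ℝ)
    (h : ∀ k l, HasDerivAt (fun s => P s k l) (P' t k l) t) (i : a) (j : d) :
    HasDerivAt (fun s => (U * P s * V) i j) ((U * P' t * V) i j) t := by
  have key : HasDerivAt (fun s => ∑ l, (∑ k, U i k * P s k l) * V l j)
      (∑ l, (∑ k, U i k * P' t k l) * V l j) t :=
    HasDerivAt.fun_sum fun l _ =>
      (HasDerivAt.fun_sum fun k _ => (h k l).const_mul (U i k)).mul_const (V l j)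
  have e1 : (fun s => (U * P s * V) i j) = fun s => ∑ l, (∑ k, U i k * P s k l) * V l j := by
    funext s; simp [Matrix.mul_apply]
  have e2 : (U * P' t * V) i j = ∑ l, (∑ k, U i k * P' t k l) * V l j := by
    simp [Matrix.mul_apply]
  rw [e1, e2]; exact key

lemma hasDerivAt_entry_sandwich {a b : Type*} [Fintype a] [Fintype b]
    (K : Matrix a a ℝ) (L L' : ℝ → Matrix a b ℝ) (t : ℝ)
    (h : ∀ k l, HasDerivAt (fun s => L s k l) (L' t k l) t) (i j : b) :
    HasDerivAt (fun s => ((L s)ᵀ * K * L s) i j)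
      (((L' t)ᵀ * K * L t + (L t)ᵀ * K * L' t) i j) t := by
  have key : HasDerivAt (fun s => ∑ l, (∑ k, L s k i * K k l) * L s l j)
      (∑ l, ((∑ k, L' t k i * K k l) * L t l j + (∑ k, L t k i * K k l) * L' t l j)) t :=
    HasDerivAt.fun_sum fun l _ =>
      (HasDerivAt.fun_sum fun k _ => (h k i).mul_const (K k l)).mul (h l j)
  have e1 : (fun s => ((L s)ᵀ * K * L s) i j)
      = fun s => ∑ l, (∑ k, L s k i * K k l) * L s l j := by
    funext s; simp [Matrix.mul_apply, Matrix.transpose_apply]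
  have e2 : (((L' t)ᵀ * K * L t + (L t)ᵀ * K * L' t) i j)
      = ∑ l, ((∑ k, L' t k i * K k l) * L t l j + (∑ k, L t k i * K k l) * L' t l j) := by
    simp [Matrix.mul_apply, Matrix.transpose_apply, Finset.sum_add_distrib]
  rw [e1, e2]; exact key

lemma matIntegrable_conj {a b c d : Type*} [Fintype b] [Fintype c]
    (U : Matrix a b ℝ) (H : ℝ → Matrix b c ℝ) (V : Matrix c d ℝ)
    (hH : MatIntegrableIoi H) : MatIntegrableIoi (fun t => U * H t * V) := by
  intro i j
  have e1 : (fun t => (U * H t * V) i j)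
      = fun t => ∑ l, ∑ k, U i k * H t k l * V l j := by
    funext t; simp [Matrix.mul_apply, Finset.sum_mul]
  rw [e1]
  apply MeasureTheory.integrable_finset_sum
  intro l _
  apply MeasureTheory.integrable_finset_sum
  intro k _
  have e2 : (fun t => U i k * H t k l * V l j)
      = fun t => (U i k * V l j) * H t k l := by funext t; ring
  rw [e2]
  exact (hH k l).const_mul _

lemma matIntIoi_conj {a b c d : Type*} [Fintype b] [Fintype c]
    (U : Matrix a b ℝ) (H : ℝ → Matrix b c ℝ) (V : Matrix c d ℝ)
    (hH : MatIntegrableIoi H) :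
    U * matIntIoi H * V = matIntIoi (fun t => U * H t * V) := by
  ext i j
  have e1 : (U * matIntIoi H * V) i j
      = ∑ l, ∑ k, U i k * (∫ t in Set.Ioi (0:ℝ), H t k l) * V l j := by
    simp [Matrix.mul_apply, Finset.sum_mul, matIntIoi]
  have e2 : (matIntIoi (fun t => U * H t * V)) i j
      = ∫ t in Set.Ioi (0:ℝ), ∑ l, ∑ k, U i k * H t k l * V l j := by
    simp only [matIntIoi, Matrix.of_apply]
    congr 1; funext t; simp [Matrix.mul_apply, Finset.sum_mul]
  rw [e1, e2]
  rw [MeasureTheory.integral_finset_sum]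
  · apply Finset.sum_congr rfl; intro l _
    rw [MeasureTheory.integral_finset_sum]
    · apply Finset.sum_congr rfl; intro k _
      have e3 : (fun t => U i k * H t k l * V l j)
          = fun t => (U i k * V l j) * H t k l := by funext t; ring
      rw [e3, MeasureTheory.integral_const_mul]; ring
    · intro k _
      have e3 : (fun t => U i k * H t k l * V l j)
          = fun t => (U i k * V l j) * H t k l := by funext t; ring
      rw [e3]; exact (hH k l).const_mul _
  · intro l _
    apply MeasureTheory.integrable_finset_sum
    intro k _
    have e3 : (fun t => U i k * H t k l * V l j)
        = fun t => (U i k * V l j) * H t k l := by funext t; ring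
    rw [e3]; exact (hH k l).const_mul _

/-- The improper-proper observability Gramian
`Q_ip = ∫₀^∞ F_J(t)ᵀ·M·P_i·M·F_J(t) dt` is well defined and solves the projected
continuous-time Lyapunov equation `Eᵀ·Q_ip·A + Aᵀ·Q_ip·E = −P_rᵀ·M·P_i·M·P_r` together with
`Q_ip = P_lᵀ·Q_ip·P_l`. -/
theorem improper_proper_observability_gramian
    {nf ni m : ℕ} (hm : 0 < m) (ν : ℕ) (hν : 0 < ν)
    -- Weierstraß canonical form data for the full-order system
    (W T Winv Tinv : Matrix (Fin nf ⊕ Fin ni) (Fin nf ⊕ Fin ni) ℝ)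
    (hW : W * Winv = 1) (hW' : Winv * W = 1)
    (hT : T * Tinv = 1) (hT' : Tinv * T = 1)
    (J : Matrix (Fin nf) (Fin nf) ℝ) (N : Matrix (Fin ni) (Fin ni) ℝ) (hN : N ^ ν = 0)
    (C α : ℝ) (hC : 0 < C) (hα : 0 < α)
    (hJ : ∀ t : ℝ, 0 ≤ t → opNorm (mexp (t • J)) ≤ C * Real.exp (-α * t))
    (E A : Matrix (Fin nf ⊕ Fin ni) (Fin nf ⊕ Fin ni) ℝ)
    (hE : E = W * fromBlocks 1 0 0 N * T)
    (hA : A = W * fromBlocks J 0 0 1 * T)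
    (B : Matrix (Fin nf ⊕ Fin ni) (Fin m) ℝ)
    (M : Matrix (Fin nf ⊕ Fin ni) (Fin nf ⊕ Fin ni) ℝ) (hM : M.IsSymm)
    -- spectral projectors
    (Pr Pl : Matrix (Fin nf ⊕ Fin ni) (Fin nf ⊕ Fin ni) ℝ)
    (hPr : Pr = Tinv * fromBlocks 1 0 0 0 * T)
    (hPl : Pl = W * fromBlocks 1 0 0 0 * Winv)
    -- fundamental solution matrices
    (FJ : ℝ → Matrix (Fin nf ⊕ Fin ni) (Fin nf ⊕ Fin ni) ℝ)
    (hFJ : ∀ t : ℝ, FJ t = Tinv * fromBlocks (mexp (t • J)) 0 0 0 * Winv)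
    (FN : ℕ → Matrix (Fin nf ⊕ Fin ni) (Fin nf ⊕ Fin ni) ℝ)
    (hFN : ∀ k : ℕ, FN k = Tinv * fromBlocks 0 0 0 (-(N ^ k)) * Winv)
    -- proper and improper controllability Gramians
    (Pp : Matrix (Fin nf ⊕ Fin ni) (Fin nf ⊕ Fin ni) ℝ)
    (hPp : Pp = matIntIoi fun t => FJ t * B * Bᵀ * (FJ t)ᵀ)
    (Pimp : Matrix (Fin nf ⊕ Fin ni) (Fin nf ⊕ Fin ni) ℝ)
    (hPimp : Pimp = ∑ k ∈ Finset.range ν, FN k * B * Bᵀ * (FN k)ᵀ)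
    -- the improper-proper observability Gramian
    (Qip : Matrix (Fin nf ⊕ Fin ni) (Fin nf ⊕ Fin ni) ℝ)
    (hQip : Qip = matIntIoi fun t => (FJ t)ᵀ * M * Pimp * M * FJ t) :
    MatIntegrableIoi (fun t => (FJ t)ᵀ * M * Pimp * M * FJ t) ∧
      Eᵀ * Qip * A + Aᵀ * Qip * E = -(Prᵀ * M * Pimp * M * Pr) ∧
      Qip = Plᵀ * Qip * Pl := by
  classical
  have h2α : (0:ℝ) < 2*α := by linarith
  -- key algebra
  have key : ∀ (B1 B2 R : Matrix (Fin nf ⊕ Fin ni) (Fin nf ⊕ Fin ni) ℝ),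
      (Tinv * B1 * Winv) * (W * B2 * R) = Tinv * (B1 * B2) * R := by
    intro B1 B2 R
    calc (Tinv * B1 * Winv) * (W * B2 * R)
        = Tinv * (B1 * ((Winv * W) * (B2 * R))) := by simp only [Matrix.mul_assoc]
      _ = Tinv * (B1 * B2) * R := by rw [hW']; simp only [Matrix.one_mul, Matrix.mul_assoc]
  have hLE : ∀ t : ℝ, FJ t * E = Tinv * fromBlocks (mexp (t • J)) 0 0 0 * T := by
    intro t; rw [hFJ, hE, key]
    simp [Matrix.fromBlocks_multiply]
  have hLA : ∀ t : ℝ, FJ t * A = Tinv * fromBlocks (mexp (t • J) * J) 0 0 0 * T := by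
    intro t; rw [hFJ, hA, key]
    simp [Matrix.fromBlocks_multiply]
  have hPlid : ∀ t : ℝ, FJ t * Pl = FJ t := by
    intro t; rw [hFJ, hPl, key]
    simp [Matrix.fromBlocks_multiply]
  have hL0 : FJ 0 * E = Pr := by
    rw [hLE 0, hPr, mexp_zero_smul]
  -- entrywise derivatives of the block matrix
  have hblkd : ∀ (t : ℝ) (k l : Fin nf ⊕ Fin ni),
      HasDerivAt (fun s => (fromBlocks (mexp (s • J)) (0 : Matrix (Fin nf) (Fin ni) ℝ)
          (0 : Matrix (Fin ni) (Fin nf) ℝ) (0 : Matrix (Fin ni) (Fin ni) ℝ)) k l)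
        ((fromBlocks (mexp (t • J) * J) 0 0 0) k l) t := by
    intro t k l
    rcases k with a | a <;> rcases l with b | b
    · simpa only [Matrix.fromBlocks_apply₁₁] using mexp_entry_hasDerivAt J t a b
    · simp only [Matrix.fromBlocks_apply₁₂, Matrix.zero_apply]; exact hasDerivAt_const t 0
    · simp only [Matrix.fromBlocks_apply₂₁, Matrix.zero_apply]; exact hasDerivAt_const t 0
    · simp only [Matrix.fromBlocks_apply₂₂, Matrix.zero_apply]; exact hasDerivAt_const t 0
  have hLd : ∀ (t : ℝ) (i j : Fin nf ⊕ Fin ni),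
      HasDerivAt (fun s => (FJ s * E) i j) ((FJ t * A) i j) t := by
    intro t i j
    have h := hasDerivAt_entry_mul3 Tinv T (fun s => fromBlocks (mexp (s • J)) 0 0 0)
      (fun s => fromBlocks (mexp (s • J) * J) 0 0 0) t (hblkd t) i j
    have e1 : (fun s => (FJ s * E) i j)
        = fun s => (Tinv * fromBlocks (mexp (s • J)) (0 : Matrix (Fin nf) (Fin ni) ℝ) (0 : Matrix (Fin ni) (Fin nf) ℝ) (0 : Matrix (Fin ni) (Fin ni) ℝ) * T) i j := by
      funext s; rw [hLE s]
    rw [e1, hLA t]; exact h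
  -- continuity
  have hΦct : Continuous fun t : ℝ => mexp (t • J) :=
    continuous_matrix fun a b => mexp_entry_continuous J a b
  have hblkc : Continuous (fun t : ℝ => fromBlocks (mexp (t • J)) (0 : Matrix (Fin nf) (Fin ni) ℝ)
      (0 : Matrix (Fin ni) (Fin nf) ℝ) (0 : Matrix (Fin ni) (Fin ni) ℝ)) := by
    apply continuous_matrix
    intro i j
    rcases i with a | a <;> rcases j with b | b
    · simpa only [Matrix.fromBlocks_apply₁₁] using hΦct.matrix_elem a b
    · simp only [Matrix.fromBlocks_apply₁₂, Matrix.zero_apply]; exact continuous_const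
    · simp only [Matrix.fromBlocks_apply₂₁, Matrix.zero_apply]; exact continuous_const
    · simp only [Matrix.fromBlocks_apply₂₂, Matrix.zero_apply]; exact continuous_const
  have hFJc : Continuous FJ := by
    have e : FJ = fun t => Tinv * fromBlocks (mexp (t • J)) (0 : Matrix (Fin nf) (Fin ni) ℝ) (0 : Matrix (Fin ni) (Fin nf) ℝ) (0 : Matrix (Fin ni) (Fin ni) ℝ) * Winv := funext hFJ
    rw [e]
    exact (continuous_const.matrix_mul hblkc).matrix_mul continuous_const
  have hHtc : Continuous (fun t => (FJ t)ᵀ * M * Pimp * M * FJ t) :=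
    ((((hFJc.matrix_transpose).matrix_mul continuous_const).matrix_mul
      continuous_const).matrix_mul continuous_const).matrix_mul hFJc
  have hSc : Continuous (fun s => (FJ s * E)ᵀ * (M * Pimp * M) * (FJ s * E)) :=
    (((hFJc.matrix_mul continuous_const).matrix_transpose).matrix_mul
      continuous_const).matrix_mul (hFJc.matrix_mul continuous_const)
  -- entry bounds
  have hcB0 : 0 ≤ eb Tinv * C * eb Winv :=
    mul_nonneg (mul_nonneg (eb_nonneg _) hC.le) (eb_nonneg _)
  have hFJbd : ∀ t : ℝ, 0 ≤ t → ∀ i j,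
      |FJ t i j| ≤ (eb Tinv * C * eb Winv) * Real.exp (-α * t) := by
    intro t ht i j
    rw [hFJ]
    have hbd : ∀ k l, |(fromBlocks (mexp (t • J)) (0 : Matrix (Fin nf) (Fin ni) ℝ)
        (0 : Matrix (Fin ni) (Fin nf) ℝ) (0 : Matrix (Fin ni) (Fin ni) ℝ)) k l|
        ≤ C * Real.exp (-α * t) := by
      intro k l
      have hpos : (0:ℝ) ≤ C * Real.exp (-α * t) := by positivity
      rcases k with a | a <;> rcases l with b | b
      · simp only [Matrix.fromBlocks_apply₁₁]
        exact (abs_entry_le_opNorm _ a b).trans (hJ t ht)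
      · simpa only [Matrix.fromBlocks_apply₁₂, Matrix.zero_apply, abs_zero] using hpos
      · simpa only [Matrix.fromBlocks_apply₂₁, Matrix.zero_apply, abs_zero] using hpos
      · simpa only [Matrix.fromBlocks_apply₂₂, Matrix.zero_apply, abs_zero] using hpos
    have h := entry_mul3_le_mid Tinv _ Winv (by positivity) hbd i j
    calc |(Tinv * fromBlocks (mexp (t • J)) (0 : Matrix (Fin nf) (Fin ni) ℝ) (0 : Matrix (Fin ni) (Fin nf) ℝ) (0 : Matrix (Fin ni) (Fin ni) ℝ) * Winv) i j|
        ≤ eb Tinv * (C * Real.exp (-α * t)) * eb Winv := h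
      _ = (eb Tinv * C * eb Winv) * Real.exp (-α * t) := by ring
  have hexpmul : ∀ t : ℝ, Real.exp (-α * t) * Real.exp (-α * t) = Real.exp (-(2*α) * t) := by
    intro t; rw [← Real.exp_add]; ring_nf
  have hHtbd : ∀ t : ℝ, 0 ≤ t → ∀ i j,
      |((FJ t)ᵀ * M * Pimp * M * FJ t) i j|
        ≤ ((eb Tinv * C * eb Winv) * (eb Tinv * C * eb Winv) * eb (M * Pimp * M))
          * Real.exp (-(2*α) * t) := by
    intro t ht i j
    have e : (FJ t)ᵀ * M * Pimp * M * FJ t = (FJ t)ᵀ * (M * Pimp * M) * FJ t := by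
      simp only [Matrix.mul_assoc]
    rw [e]
    have hpos : (0:ℝ) ≤ (eb Tinv * C * eb Winv) * Real.exp (-α * t) :=
      mul_nonneg hcB0 (Real.exp_pos _).le
    have h1 : ∀ k l, |(FJ t)ᵀ k l| ≤ (eb Tinv * C * eb Winv) * Real.exp (-α * t) := by
      intro k l; rw [Matrix.transpose_apply]; exact hFJbd t ht l k
    have h := entry_mul3_le_out ((FJ t)ᵀ) (M * Pimp * M) (FJ t) hpos hpos h1
      (fun l j' => hFJbd t ht l j') i j
    calc |((FJ t)ᵀ * (M * Pimp * M) * FJ t) i j|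
        ≤ ((eb Tinv * C * eb Winv) * Real.exp (-α * t)) * eb (M * Pimp * M)
          * ((eb Tinv * C * eb Winv) * Real.exp (-α * t)) := h
      _ = ((eb Tinv * C * eb Winv) * (eb Tinv * C * eb Winv) * eb (M * Pimp * M))
          * (Real.exp (-α * t) * Real.exp (-α * t)) := by ring
      _ = _ := by rw [hexpmul t]
  -- integrability
  have hgint : MeasureTheory.IntegrableOn
      (fun t => ((eb Tinv * C * eb Winv) * (eb Tinv * C * eb Winv) * eb (M * Pimp * M))
        * Real.exp (-(2*α) * t)) (Set.Ioi (0:ℝ)) :=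
    (exp_neg_integrableOn_Ioi 0 h2α).const_mul _
  have hHint : MatIntegrableIoi (fun t => (FJ t)ᵀ * M * Pimp * M * FJ t) := by
    intro i j
    refine MeasureTheory.Integrable.mono' hgint
      ((hHtc.matrix_elem i j).aestronglyMeasurable.restrict) ?_
    filter_upwards [MeasureTheory.ae_restrict_mem measurableSet_Ioi] with t ht
    rw [Real.norm_eq_abs]
    exact hHtbd t (le_of_lt ht) i j
  have hAHE : MatIntegrableIoi (fun t => Aᵀ * ((FJ t)ᵀ * M * Pimp * M * FJ t) * E) :=
    matIntegrable_conj Aᵀ _ E hHint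
  have hEHA : MatIntegrableIoi (fun t => Eᵀ * ((FJ t)ᵀ * M * Pimp * M * FJ t) * A) :=
    matIntegrable_conj Eᵀ _ A hHint
  -- derivative of the sandwiched function
  have hSd : ∀ (t : ℝ) (i j : Fin nf ⊕ Fin ni),
      HasDerivAt (fun s => ((FJ s * E)ᵀ * (M * Pimp * M) * (FJ s * E)) i j)
        ((Aᵀ * ((FJ t)ᵀ * M * Pimp * M * FJ t) * E
          + Eᵀ * ((FJ t)ᵀ * M * Pimp * M * FJ t) * A) i j) t := by
    intro t i j
    have h := hasDerivAt_entry_sandwich (M * Pimp * M) (fun s => FJ s * E)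
      (fun s => FJ s * A) t (fun k l => hLd t k l) i j
    have e : (FJ t * A)ᵀ * (M * Pimp * M) * (FJ t * E)
          + (FJ t * E)ᵀ * (M * Pimp * M) * (FJ t * A)
        = Aᵀ * ((FJ t)ᵀ * M * Pimp * M * FJ t) * E
          + Eᵀ * ((FJ t)ᵀ * M * Pimp * M * FJ t) * A := by
      simp only [Matrix.transpose_mul, Matrix.mul_assoc]
    rw [e] at h
    exact h
  have hS_eq : ∀ t : ℝ, (FJ t * E)ᵀ * (M * Pimp * M) * (FJ t * E)
      = Eᵀ * ((FJ t)ᵀ * M * Pimp * M * FJ t) * E := by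
    intro t; simp only [Matrix.transpose_mul, Matrix.mul_assoc]
  -- tendsto zero at infinity
  have hexp0 : Filter.Tendsto (fun t : ℝ => Real.exp (-(2*α) * t)) Filter.atTop (nhds 0) := by
    have h1 : Filter.Tendsto (fun t : ℝ => (2*α) * t) Filter.atTop Filter.atTop :=
      Filter.Tendsto.const_mul_atTop h2α Filter.tendsto_id
    have h2 := Real.tendsto_exp_neg_atTop_nhds_zero.comp h1
    simpa [Function.comp_def, neg_mul] using h2
  have hStend : ∀ i j : Fin nf ⊕ Fin ni,
      Filter.Tendsto (fun t => ((FJ t * E)ᵀ * (M * Pimp * M) * (FJ t * E)) i j)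
        Filter.atTop (nhds 0) := by
    intro i j
    have hbound : ∀ᶠ t in Filter.atTop,
        ‖((FJ t * E)ᵀ * (M * Pimp * M) * (FJ t * E)) i j‖
          ≤ (eb Eᵀ * ((eb Tinv * C * eb Winv) * (eb Tinv * C * eb Winv) * eb (M * Pimp * M)) * eb E)
            * Real.exp (-(2*α) * t) := by
      filter_upwards [Filter.eventually_ge_atTop (0:ℝ)] with t ht
      rw [Real.norm_eq_abs, hS_eq t]
      have hcc : (0:ℝ) ≤ (eb Tinv * C * eb Winv) * (eb Tinv * C * eb Winv) * eb (M * Pimp * M)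
          * Real.exp (-(2*α) * t) :=
        mul_nonneg (mul_nonneg (mul_nonneg hcB0 hcB0) (eb_nonneg _)) (Real.exp_pos _).le
      have h := entry_mul3_le_mid Eᵀ _ E hcc (fun k l => hHtbd t ht k l) i j
      calc |(Eᵀ * ((FJ t)ᵀ * M * Pimp * M * FJ t) * E) i j|
          ≤ eb Eᵀ * ((eb Tinv * C * eb Winv) * (eb Tinv * C * eb Winv) * eb (M * Pimp * M)
            * Real.exp (-(2*α) * t)) * eb E := h
        _ = (eb Eᵀ * ((eb Tinv * C * eb Winv) * (eb Tinv * C * eb Winv) * eb (M * Pimp * M))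
            * eb E) * Real.exp (-(2*α) * t) := by ring
    have htend := hexp0.const_mul
      (eb Eᵀ * ((eb Tinv * C * eb Winv) * (eb Tinv * C * eb Winv) * eb (M * Pimp * M)) * eb E)
    rw [mul_zero] at htend
    exact squeeze_zero_norm' hbound htend
  -- FTC on (0, ∞)
  have hFTC : ∀ i j : Fin nf ⊕ Fin ni,
      (∫ t in Set.Ioi (0:ℝ), (Aᵀ * ((FJ t)ᵀ * M * Pimp * M * FJ t) * E
          + Eᵀ * ((FJ t)ᵀ * M * Pimp * M * FJ t) * A) i j)
        = 0 - ((FJ 0 * E)ᵀ * (M * Pimp * M) * (FJ 0 * E)) i j := by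
    intro i j
    refine MeasureTheory.integral_Ioi_of_hasDerivAt_of_tendsto
      (f := fun s => ((FJ s * E)ᵀ * (M * Pimp * M) * (FJ s * E)) i j)
      (f' := fun t => (Aᵀ * ((FJ t)ᵀ * M * Pimp * M * FJ t) * E
        + Eᵀ * ((FJ t)ᵀ * M * Pimp * M * FJ t) * A) i j) ?_ ?_ ?_ ?_
    · exact ((hSc.matrix_elem i j).continuousAt).continuousWithinAt
    · intro x _; exact hSd x i j
    · have h := (hAHE i j).add (hEHA i j)
      simpa only [Matrix.add_apply, Pi.add_def] using h
    · exact hStend i j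
  refine ⟨hHint, ?_, ?_⟩
  · -- the Lyapunov equation
    rw [hQip, matIntIoi_conj Eᵀ _ A hHint, matIntIoi_conj Aᵀ _ E hHint]
    ext i j
    simp only [Matrix.add_apply, matIntIoi, Matrix.of_apply, Matrix.neg_apply]
    calc (∫ t in Set.Ioi (0:ℝ), (Eᵀ * ((FJ t)ᵀ * M * Pimp * M * FJ t) * A) i j)
          + (∫ t in Set.Ioi (0:ℝ), (Aᵀ * ((FJ t)ᵀ * M * Pimp * M * FJ t) * E) i j)
        = ∫ t in Set.Ioi (0:ℝ), (Aᵀ * ((FJ t)ᵀ * M * Pimp * M * FJ t) * E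
            + Eᵀ * ((FJ t)ᵀ * M * Pimp * M * FJ t) * A) i j := by
          rw [add_comm, ← MeasureTheory.integral_add (hAHE i j) (hEHA i j)]
          simp only [Matrix.add_apply]
      _ = 0 - ((FJ 0 * E)ᵀ * (M * Pimp * M) * (FJ 0 * E)) i j := hFTC i j
      _ = -(Prᵀ * M * Pimp * M * Pr) i j := by
          have e : Prᵀ * (M * Pimp * M) * Pr = Prᵀ * M * Pimp * M * Pr := by
            simp only [Matrix.mul_assoc]
          rw [hL0, e, zero_sub]
  · -- the projection property
    rw [hQip, matIntIoi_conj Plᵀ _ Pl hHint]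
    refine congrArg matIntIoi ?_
    funext t
    have h1 : Plᵀ * (FJ t)ᵀ = (FJ t)ᵀ := by rw [← Matrix.transpose_mul, hPlid]
    calc (FJ t)ᵀ * M * Pimp * M * FJ t
        = (Plᵀ * (FJ t)ᵀ) * M * Pimp * M * (FJ t * Pl) := by rw [h1, hPlid]
      _ = Plᵀ * ((FJ t)ᵀ * M * Pimp * M * FJ t) * Pl := by simp only [Matrix.mul_assoc]
end

section
/- The proper-improper observability Gramian Q_pi := Σ_{k=0}^{ν−1} F_N(k)^T·M·P_p·M·F_N(k) solves the projected generalized discrete-time Lyapunov equation A^T·Q_pi·A − E^T·Q_pi·E = (I − P_r)^T·M·P_p·M·(I − P_r) together with the projection condition P_l^T·Q_pi·P_l = 0. -/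
open MeasureTheory Matrix

/-- The proper-improper observability Gramian
`Q_pi = ∑_{k<ν} F_N(k)ᵀ·M·P_p·M·F_N(k)` solves the projected generalized discrete-time
Lyapunov equation `Aᵀ·Q_pi·A − Eᵀ·Q_pi·E = (I − P_r)ᵀ·M·P_p·M·(I − P_r)` together with
`P_lᵀ·Q_pi·P_l = 0`. -/
theorem proper_improper_observability_gramian
    {nf ni m : ℕ} (hm : 0 < m) (ν : ℕ) (hν : 0 < ν)
    -- Weierstraß canonical form data for the full-order system
    (W T Winv Tinv : Matrix (Fin nf ⊕ Fin ni) (Fin nf ⊕ Fin ni) ℝ)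
    (hW : W * Winv = 1) (hW' : Winv * W = 1)
    (hT : T * Tinv = 1) (hT' : Tinv * T = 1)
    (J : Matrix (Fin nf) (Fin nf) ℝ) (N : Matrix (Fin ni) (Fin ni) ℝ) (hN : N ^ ν = 0)
    (C α : ℝ) (hC : 0 < C) (hα : 0 < α)
    (hJ : ∀ t : ℝ, 0 ≤ t → opNorm (mexp (t • J)) ≤ C * Real.exp (-α * t))
    (E A : Matrix (Fin nf ⊕ Fin ni) (Fin nf ⊕ Fin ni) ℝ)
    (hE : E = W * fromBlocks 1 0 0 N * T)
    (hA : A = W * fromBlocks J 0 0 1 * T)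
    (B : Matrix (Fin nf ⊕ Fin ni) (Fin m) ℝ)
    (M : Matrix (Fin nf ⊕ Fin ni) (Fin nf ⊕ Fin ni) ℝ) (hM : M.IsSymm)
    -- spectral projectors
    (Pr Pl : Matrix (Fin nf ⊕ Fin ni) (Fin nf ⊕ Fin ni) ℝ)
    (hPr : Pr = Tinv * fromBlocks 1 0 0 0 * T)
    (hPl : Pl = W * fromBlocks 1 0 0 0 * Winv)
    -- fundamental solution matrices
    (FJ : ℝ → Matrix (Fin nf ⊕ Fin ni) (Fin nf ⊕ Fin ni) ℝ)
    (hFJ : ∀ t : ℝ, FJ t = Tinv * fromBlocks (mexp (t • J)) 0 0 0 * Winv)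
    (FN : ℕ → Matrix (Fin nf ⊕ Fin ni) (Fin nf ⊕ Fin ni) ℝ)
    (hFN : ∀ k : ℕ, FN k = Tinv * fromBlocks 0 0 0 (-(N ^ k)) * Winv)
    -- proper and improper controllability Gramians
    (Pp : Matrix (Fin nf ⊕ Fin ni) (Fin nf ⊕ Fin ni) ℝ)
    (hPp : Pp = matIntIoi fun t => FJ t * B * Bᵀ * (FJ t)ᵀ)
    (Pimp : Matrix (Fin nf ⊕ Fin ni) (Fin nf ⊕ Fin ni) ℝ)
    (hPimp : Pimp = ∑ k ∈ Finset.range ν, FN k * B * Bᵀ * (FN k)ᵀ)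
    -- the proper-improper observability Gramian
    (Qpi : Matrix (Fin nf ⊕ Fin ni) (Fin nf ⊕ Fin ni) ℝ)
    (hQpi : Qpi = ∑ k ∈ Finset.range ν, (FN k)ᵀ * M * Pp * M * FN k) :
    Aᵀ * Qpi * A - Eᵀ * Qpi * E = (1 - Pr)ᵀ * M * Pp * M * (1 - Pr) ∧
      Plᵀ * Qpi * Pl = 0 := by
  -- abbreviation for the sandwiched products
  set G : ℕ → Matrix (Fin nf ⊕ Fin ni) (Fin nf ⊕ Fin ni) ℝ :=
    fun k => Tinv * fromBlocks 0 0 0 (-(N ^ k)) * T with hG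
  have mulWT : ∀ X Y : Matrix (Fin nf ⊕ Fin ni) (Fin nf ⊕ Fin ni) ℝ,
      (Tinv * X * Winv) * (W * Y * T) = Tinv * (X * Y) * T := by
    intro X Y
    calc (Tinv * X * Winv) * (W * Y * T)
        = Tinv * (X * ((Winv * W) * (Y * T))) := by
          simp only [Matrix.mul_assoc]
      _ = Tinv * (X * Y) * T := by rw [hW']; simp only [Matrix.one_mul, Matrix.mul_assoc]
  have mulWW : ∀ X Y : Matrix (Fin nf ⊕ Fin ni) (Fin nf ⊕ Fin ni) ℝ,
      (Tinv * X * Winv) * (W * Y * Winv) = Tinv * (X * Y) * Winv := by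
    intro X Y
    calc (Tinv * X * Winv) * (W * Y * Winv)
        = Tinv * (X * ((Winv * W) * (Y * Winv))) := by
          simp only [Matrix.mul_assoc]
      _ = Tinv * (X * Y) * Winv := by rw [hW']; simp only [Matrix.one_mul, Matrix.mul_assoc]
  have hFNA : ∀ k, FN k * A = G k := by
    intro k
    rw [hFN, hA, mulWT, hG]
    congr 1
    congr 1
    simp [Matrix.fromBlocks_multiply]
  have hFNE : ∀ k, FN k * E = G (k + 1) := by
    intro k
    rw [hFN, hE, mulWT, hG]
    congr 1
    congr 1
    simp [Matrix.fromBlocks_multiply, pow_succ]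
  have hFNPl : ∀ k, FN k * Pl = 0 := by
    intro k
    rw [hFN, hPl, mulWW]
    have : fromBlocks (0 : Matrix (Fin nf) (Fin nf) ℝ) 0 0 (-(N ^ k)) *
        fromBlocks (1 : Matrix (Fin nf) (Fin nf) ℝ) 0 0 0 = 0 := by
      simp [Matrix.fromBlocks_multiply, ← Matrix.fromBlocks_zero]
    rw [this, Matrix.mul_zero, Matrix.zero_mul]
  have sandwich : ∀ (X : Matrix (Fin nf ⊕ Fin ni) (Fin nf ⊕ Fin ni) ℝ) (Z : Matrix (Fin nf ⊕ Fin ni) (Fin nf ⊕ Fin ni) ℝ),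
      Zᵀ * (Xᵀ * M * Pp * M * X) * Z = (X * Z)ᵀ * M * Pp * M * (X * Z) := by
    intro X Z
    simp only [Matrix.transpose_mul, Matrix.mul_assoc]
  constructor
  · have eqA : Aᵀ * Qpi * A = ∑ k ∈ Finset.range ν, (G k)ᵀ * M * Pp * M * (G k) := by
      rw [hQpi, Finset.mul_sum, Finset.sum_mul]
      exact Finset.sum_congr rfl fun k _ => by rw [sandwich, hFNA]
    have eqE : Eᵀ * Qpi * E = ∑ k ∈ Finset.range ν, (G (k+1))ᵀ * M * Pp * M * (G (k+1)) := by
      rw [hQpi, Finset.mul_sum, Finset.sum_mul]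
      exact Finset.sum_congr rfl fun k _ => by rw [sandwich, hFNE]
    rw [eqA, eqE, ← Finset.sum_sub_distrib,
      Finset.sum_range_sub' (fun k => (G k)ᵀ * M * Pp * M * (G k)) ν]
    have hGν : G ν = 0 := by
      have : fromBlocks (0 : Matrix (Fin nf) (Fin nf) ℝ) 0 0 (-(N ^ ν)) = 0 := by
        rw [hN, neg_zero, Matrix.fromBlocks_zero]
      rw [hG]
      simp only [this, Matrix.mul_zero, Matrix.zero_mul]
    have hblk : (1 : Matrix (Fin nf ⊕ Fin ni) (Fin nf ⊕ Fin ni) ℝ) -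
        fromBlocks 1 0 0 0 = fromBlocks (0 : Matrix (Fin nf) (Fin nf) ℝ) 0 0 1 := by
      ext (i | i) (j | j) <;>
        simp [Matrix.fromBlocks, Matrix.sub_apply, Matrix.one_apply]
    have hG0 : G 0 = -(1 - Pr) := by
      have h1 : (1 : Matrix (Fin nf ⊕ Fin ni) (Fin nf ⊕ Fin ni) ℝ) = Tinv * 1 * T := by
        rw [Matrix.mul_one, hT']
      have hneg : fromBlocks (0 : Matrix (Fin nf) (Fin nf) ℝ) 0 0 (-(N ^ 0)) =
          -(fromBlocks (0 : Matrix (Fin nf) (Fin nf) ℝ) 0 0 1) := by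
        ext (i | i) (j | j) <;>
          simp [Matrix.fromBlocks, Matrix.neg_apply]
      rw [hG]
      simp only
      rw [hneg, ← hblk, hPr]
      rw [Matrix.mul_neg, Matrix.neg_mul, Matrix.mul_sub, Matrix.sub_mul, ← h1]
    rw [hGν, hG0]
    simp only [Matrix.transpose_zero, Matrix.mul_zero, Matrix.zero_mul, sub_zero,
      Matrix.transpose_neg, Matrix.neg_mul, Matrix.mul_neg, neg_neg]
  · rw [hQpi, Finset.mul_sum, Finset.sum_mul]
    refine Finset.sum_eq_zero fun k _ => ?_
    rw [sandwich, hFNPl]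
    simp
end

section
/- The improper-improper observability Gramian Q_ii := Σ_{k=0}^{ν−1} F_N(k)^T·M·P_i·M·F_N(k) solves the projected generalized discrete-time Lyapunov equation A^T·Q_ii·A − E^T·Q_ii·E = (I − P_r)^T·M·P_i·M·(I − P_r) together with the projection condition P_l^T·Q_ii·P_l = 0. -/
open MeasureTheory Matrix

/-- The improper-improper observability Gramian
`Q_ii = ∑_{k<ν} F_N(k)ᵀ·M·P_i·M·F_N(k)` solves the projected generalized discrete-time
Lyapunov equation `Aᵀ·Q_ii·A − Eᵀ·Q_ii·E = (I − P_r)ᵀ·M·P_i·M·(I − P_r)` together with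
`P_lᵀ·Q_ii·P_l = 0`. -/
theorem improper_improper_observability_gramian
    {nf ni m : ℕ} (hm : 0 < m) (ν : ℕ) (hν : 0 < ν)
    -- Weierstraß canonical form data for the full-order system
    (W T Winv Tinv : Matrix (Fin nf ⊕ Fin ni) (Fin nf ⊕ Fin ni) ℝ)
    (hW : W * Winv = 1) (hW' : Winv * W = 1)
    (hT : T * Tinv = 1) (hT' : Tinv * T = 1)
    (J : Matrix (Fin nf) (Fin nf) ℝ) (N : Matrix (Fin ni) (Fin ni) ℝ) (hN : N ^ ν = 0)
    (C α : ℝ) (hC : 0 < C) (hα : 0 < α)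
    (hJ : ∀ t : ℝ, 0 ≤ t → opNorm (mexp (t • J)) ≤ C * Real.exp (-α * t))
    (E A : Matrix (Fin nf ⊕ Fin ni) (Fin nf ⊕ Fin ni) ℝ)
    (hE : E = W * fromBlocks 1 0 0 N * T)
    (hA : A = W * fromBlocks J 0 0 1 * T)
    (B : Matrix (Fin nf ⊕ Fin ni) (Fin m) ℝ)
    (M : Matrix (Fin nf ⊕ Fin ni) (Fin nf ⊕ Fin ni) ℝ) (hM : M.IsSymm)
    -- spectral projectors
    (Pr Pl : Matrix (Fin nf ⊕ Fin ni) (Fin nf ⊕ Fin ni) ℝ)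
    (hPr : Pr = Tinv * fromBlocks 1 0 0 0 * T)
    (hPl : Pl = W * fromBlocks 1 0 0 0 * Winv)
    -- fundamental solution matrices
    (FJ : ℝ → Matrix (Fin nf ⊕ Fin ni) (Fin nf ⊕ Fin ni) ℝ)
    (hFJ : ∀ t : ℝ, FJ t = Tinv * fromBlocks (mexp (t • J)) 0 0 0 * Winv)
    (FN : ℕ → Matrix (Fin nf ⊕ Fin ni) (Fin nf ⊕ Fin ni) ℝ)
    (hFN : ∀ k : ℕ, FN k = Tinv * fromBlocks 0 0 0 (-(N ^ k)) * Winv)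
    -- proper and improper controllability Gramians
    (Pp : Matrix (Fin nf ⊕ Fin ni) (Fin nf ⊕ Fin ni) ℝ)
    (hPp : Pp = matIntIoi fun t => FJ t * B * Bᵀ * (FJ t)ᵀ)
    (Pimp : Matrix (Fin nf ⊕ Fin ni) (Fin nf ⊕ Fin ni) ℝ)
    (hPimp : Pimp = ∑ k ∈ Finset.range ν, FN k * B * Bᵀ * (FN k)ᵀ)
    -- the improper-improper observability Gramian
    (Qii : Matrix (Fin nf ⊕ Fin ni) (Fin nf ⊕ Fin ni) ℝ)
    (hQii : Qii = ∑ k ∈ Finset.range ν, (FN k)ᵀ * M * Pimp * M * FN k) :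
    Aᵀ * Qii * A - Eᵀ * Qii * E = (1 - Pr)ᵀ * M * Pimp * M * (1 - Pr) ∧
      Plᵀ * Qii * Pl = 0 := by
  classical
  have conj : ∀ (X Y : Matrix (Fin nf ⊕ Fin ni) (Fin nf ⊕ Fin ni) ℝ),
      (Tinv * X * Winv) * (W * Y * T) = Tinv * (X * Y) * T := by
    intro X Y
    have h : Winv * (W * (Y * T)) = Y * T := by
      rw [← Matrix.mul_assoc, hW', Matrix.one_mul]
    simp only [Matrix.mul_assoc, h]
  set g : ℕ → Matrix (Fin nf ⊕ Fin ni) (Fin nf ⊕ Fin ni) ℝ :=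
    fun k => Tinv * fromBlocks 0 0 0 (-(N ^ k)) * T with hg
  have h1 : ∀ k, FN k * A = g k := by
    intro k
    rw [hFN, hA, conj, hg]
    simp [Matrix.fromBlocks_multiply]
  have h2 : ∀ k, FN k * E = g (k + 1) := by
    intro k
    rw [hFN, hE, conj, hg]
    simp [Matrix.fromBlocks_multiply, pow_succ]
  have conj2 : ∀ (X Y : Matrix (Fin nf ⊕ Fin ni) (Fin nf ⊕ Fin ni) ℝ),
      (Tinv * X * Winv) * (W * Y * Winv) = Tinv * (X * Y) * Winv := by
    intro X Y
    have h : Winv * (W * (Y * Winv)) = Y * Winv := by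
      rw [← Matrix.mul_assoc, hW', Matrix.one_mul]
    simp only [Matrix.mul_assoc, h]
  have h3 : ∀ k, FN k * Pl = 0 := by
    intro k
    rw [hFN, hPl, conj2]
    simp [Matrix.fromBlocks_multiply]
  have hterm : ∀ (X : Matrix (Fin nf ⊕ Fin ni) (Fin nf ⊕ Fin ni) ℝ) (k : ℕ),
      Xᵀ * ((FN k)ᵀ * M * Pimp * M * FN k) * X
        = (FN k * X)ᵀ * M * Pimp * M * (FN k * X) := by
    intro X k
    simp [Matrix.transpose_mul, Matrix.mul_assoc]
  constructor
  · have expand : ∀ (X : Matrix (Fin nf ⊕ Fin ni) (Fin nf ⊕ Fin ni) ℝ),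
        Xᵀ * Qii * X = ∑ k ∈ Finset.range ν, (FN k * X)ᵀ * M * Pimp * M * (FN k * X) := by
      intro X
      rw [hQii, Finset.mul_sum, Finset.sum_mul]
      exact Finset.sum_congr rfl fun k _ => hterm X k
    rw [expand A, expand E]
    simp only [h1, h2]
    rw [← Finset.sum_sub_distrib, Finset.sum_range_sub'
      (f := fun k => (g k)ᵀ * M * Pimp * M * g k)]
    have hgν : g ν = 0 := by
      simp [hg, hN]
    have hg0 : g 0 = -(1 - Pr) := by
      have h1Pr : 1 - Pr = Tinv * fromBlocks 0 0 0 1 * T := by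
        rw [hPr]
        have : (1 : Matrix (Fin nf ⊕ Fin ni) (Fin nf ⊕ Fin ni) ℝ) = Tinv * 1 * T := by
          rw [Matrix.mul_one, hT']
        rw [this]
        rw [← Matrix.sub_mul, ← Matrix.mul_sub]
        congr 1
        congr 1
        rw [← Matrix.fromBlocks_one]
        ext i j
        cases i <;> cases j <;> simp [Matrix.fromBlocks]
      rw [h1Pr, hg]
      simp only [pow_zero]
      ext i j
      cases i <;> cases j <;> simp [Matrix.mul_apply, Matrix.fromBlocks]
    rw [hgν, hg0]
    simp only [Matrix.transpose_neg, Matrix.neg_mul, Matrix.mul_neg, neg_neg,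
      Matrix.zero_mul, Matrix.mul_zero, Matrix.transpose_zero, sub_zero]
  · rw [hQii, Finset.mul_sum, Finset.sum_mul]
    have : ∀ k ∈ Finset.range ν,
        Plᵀ * ((FN k)ᵀ * M * Pimp * M * FN k) * Pl = 0 := by
      intro k _
      rw [hterm, h3]
      simp
    rw [Finset.sum_congr rfl this]
    simp
end

section
/- The squared L₂-norm of the proper-proper kernel satisfies ∫₀^∞∫₀^∞ ‖h_pp(t₁,t₂)‖₂² dt₁ dt₂ = trace(P_p·M·P_p·M), where h_pp(t₁,t₂) := vec(B^T·F_J(t₁)^T·M·F_J(t₂)·B) and ‖·‖₂ is the Euclidean norm on ℝ^{m²}. -/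
open MeasureTheory Matrix

lemma continuous_mexp_entry {d : ℕ} (J : Matrix (Fin d) (Fin d) ℝ) (i j : Fin d) :
    Continuous fun t : ℝ => mexp (t • J) i j := by
  letI := Matrix.linftyOpNormedRing (n := Fin d) (α := ℝ)
  letI := Matrix.linftyOpNormedAlgebra (n := Fin d) (R := ℝ) (α := ℝ)
  letI := NormedAlgebra.restrictScalars ℚ ℝ (Matrix (Fin d) (Fin d) ℝ)
  have h1 : Continuous fun t : ℝ => mexp (t • J) := by
    have : Continuous fun t : ℝ => t • J := by continuity
    exact (NormedSpace.exp_continuous (𝔸 := Matrix (Fin d) (Fin d) ℝ)).comp this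
  exact ((continuous_apply j).comp (continuous_apply i)).comp h1

/-- decaying continuous function -/
def GoodFun (α : ℝ) (f : ℝ → ℝ) : Prop :=
  Continuous f ∧ ∃ c : ℝ, ∀ t : ℝ, 0 ≤ t → |f t| ≤ c * Real.exp (-α * t)

lemma GoodFun.const_mul {α : ℝ} {f : ℝ → ℝ} (h : GoodFun α f) (k : ℝ) :
    GoodFun α (fun t => k * f t) := by
  obtain ⟨hc, c, hb⟩ := h
  refine ⟨continuous_const.mul hc, |k| * c, fun t ht => ?_⟩
  rw [abs_mul, mul_assoc]
  exact mul_le_mul_of_nonneg_left (hb t ht) (abs_nonneg k)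

lemma GoodFun.mul_const {α : ℝ} {f : ℝ → ℝ} (h : GoodFun α f) (k : ℝ) :
    GoodFun α (fun t => f t * k) := by
  simpa [mul_comm] using h.const_mul k

lemma GoodFun.zero {α : ℝ} : GoodFun α (fun _ => (0:ℝ)) :=
  ⟨continuous_const, 0, fun t _ => by simp⟩

lemma GoodFun.sum {α : ℝ} {ι : Type*} (s : Finset ι) (f : ι → ℝ → ℝ)
    (h : ∀ k ∈ s, GoodFun α (f k)) : GoodFun α (fun t => ∑ k ∈ s, f k t) := by
  classical
  induction s using Finset.induction_on with
  | empty => simpa using GoodFun.zero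
  | @insert a s' hx ih =>
      obtain ⟨hc, c, hb⟩ := h a (Finset.mem_insert_self a s')
      obtain ⟨hc', c', hb'⟩ := ih (fun k hk => h k (Finset.mem_insert_of_mem hk))
      refine ⟨?_, c + c', fun t ht => ?_⟩
      · simp only [Finset.sum_insert hx]; exact hc.add hc'
      · simp only [Finset.sum_insert hx]
        calc |f a t + ∑ k ∈ s', f k t| ≤ |f a t| + |∑ k ∈ s', f k t| := abs_add_le _ _
        _ ≤ c * Real.exp (-α * t) + c' * Real.exp (-α * t) :=
            add_le_add (hb t ht) (hb' t ht)
        _ = (c + c') * Real.exp (-α * t) := by ring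

lemma GoodFun.integrableOn_mul {α : ℝ} (hα : 0 < α) {f g : ℝ → ℝ}
    (hf : GoodFun α f) (hg : GoodFun α g) :
    MeasureTheory.IntegrableOn (fun t => f t * g t) (Set.Ioi (0:ℝ)) := by
  obtain ⟨hfc, c, hfb⟩ := hf
  obtain ⟨hgc, c', hgb⟩ := hg
  have hdom : MeasureTheory.IntegrableOn (fun t => c * c' * Real.exp (-(2*α) * t))
      (Set.Ioi (0:ℝ)) := (exp_neg_integrableOn_Ioi 0 (by linarith)).const_mul _
  refine hdom.mono' ((hfc.mul hgc).aestronglyMeasurable) ?_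
  filter_upwards [MeasureTheory.ae_restrict_mem measurableSet_Ioi] with t ht
  have ht' : (0:ℝ) ≤ t := le_of_lt ht
  have h1 := hfb t ht'
  have h2 := hgb t ht'
  have : |f t * g t| ≤ (c * Real.exp (-α * t)) * (c' * Real.exp (-α * t)) := by
    rw [abs_mul]
    exact mul_le_mul h1 h2 (abs_nonneg _) (le_trans (abs_nonneg _) h1)
  rw [Real.norm_eq_abs]
  refine le_trans this (le_of_eq ?_)
  rw [show c * Real.exp (-α * t) * (c' * Real.exp (-α * t)) = c * c' * (Real.exp (-α*t) * Real.exp (-α*t)) by ring, ← Real.exp_add]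
  ring_nf

lemma sum4_swap {ι κ σ τ : Type*} [Fintype ι] [Fintype κ] [Fintype σ] [Fintype τ]
    (f : ι → κ → σ → τ → ℝ) :
    ∑ i : ι, ∑ j : κ, ∑ p : σ, ∑ q : τ, f i j p q
      = ∑ p : σ, ∑ q : τ, ∑ i : ι, ∑ j : κ, f i j p q := by
  have h1 : ∀ i : ι, ∑ j : κ, ∑ p : σ, ∑ q : τ, f i j p q
      = ∑ p : σ, ∑ q : τ, ∑ j : κ, f i j p q := by
    intro i
    rw [Finset.sum_comm]
    exact Finset.sum_congr rfl fun p _ => Finset.sum_comm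
  simp_rw [h1]
  rw [Finset.sum_comm]
  exact Finset.sum_congr rfl fun p _ => Finset.sum_comm

/-- `∫₀^∞∫₀^∞ ‖h_pp(t₁,t₂)‖₂² dt₁ dt₂ = trace(P_p·M·P_p·M)`. -/
theorem proper_proper_kernel_norm_eq_trace
    {nf ni m : ℕ} (hm : 0 < m) (ν : ℕ) (hν : 0 < ν)
    -- Weierstraß canonical form data for the full-order system
    (W T Winv Tinv : Matrix (Fin nf ⊕ Fin ni) (Fin nf ⊕ Fin ni) ℝ)
    (hW : W * Winv = 1) (hW' : Winv * W = 1)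
    (hT : T * Tinv = 1) (hT' : Tinv * T = 1)
    (J : Matrix (Fin nf) (Fin nf) ℝ) (N : Matrix (Fin ni) (Fin ni) ℝ) (hN : N ^ ν = 0)
    (C α : ℝ) (hC : 0 < C) (hα : 0 < α)
    (hJ : ∀ t : ℝ, 0 ≤ t → opNorm (mexp (t • J)) ≤ C * Real.exp (-α * t))
    (E A : Matrix (Fin nf ⊕ Fin ni) (Fin nf ⊕ Fin ni) ℝ)
    (hE : E = W * fromBlocks 1 0 0 N * T)
    (hA : A = W * fromBlocks J 0 0 1 * T)
    (B : Matrix (Fin nf ⊕ Fin ni) (Fin m) ℝ)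
    (M : Matrix (Fin nf ⊕ Fin ni) (Fin nf ⊕ Fin ni) ℝ) (hM : M.IsSymm)
    -- spectral projectors
    (Pr Pl : Matrix (Fin nf ⊕ Fin ni) (Fin nf ⊕ Fin ni) ℝ)
    (hPr : Pr = Tinv * fromBlocks 1 0 0 0 * T)
    (hPl : Pl = W * fromBlocks 1 0 0 0 * Winv)
    -- fundamental solution matrices
    (FJ : ℝ → Matrix (Fin nf ⊕ Fin ni) (Fin nf ⊕ Fin ni) ℝ)
    (hFJ : ∀ t : ℝ, FJ t = Tinv * fromBlocks (mexp (t • J)) 0 0 0 * Winv)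
    (FN : ℕ → Matrix (Fin nf ⊕ Fin ni) (Fin nf ⊕ Fin ni) ℝ)
    (hFN : ∀ k : ℕ, FN k = Tinv * fromBlocks 0 0 0 (-(N ^ k)) * Winv)
    -- proper and improper controllability Gramians
    (Pp : Matrix (Fin nf ⊕ Fin ni) (Fin nf ⊕ Fin ni) ℝ)
    (hPp : Pp = matIntIoi fun t => FJ t * B * Bᵀ * (FJ t)ᵀ)
    (Pimp : Matrix (Fin nf ⊕ Fin ni) (Fin nf ⊕ Fin ni) ℝ)
    (hPimp : Pimp = ∑ k ∈ Finset.range ν, FN k * B * Bᵀ * (FN k)ᵀ)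
    -- the proper-proper kernel
    (hpp : ℝ → ℝ → Fin m × Fin m → ℝ)
    (hhpp : ∀ t1 t2 : ℝ, hpp t1 t2 = vecm (Bᵀ * (FJ t1)ᵀ * M * FJ t2 * B)) :
    (∫ t1 in Set.Ioi (0:ℝ), ∫ t2 in Set.Ioi (0:ℝ), enormSq (hpp t1 t2)) =
      Matrix.trace (Pp * M * Pp * M) := by
  classical
  have goodX : ∀ p q : Fin nf ⊕ Fin ni, GoodFun α (fun t =>
      (fromBlocks (mexp (t • J)) 0 0 0 : Matrix (Fin nf ⊕ Fin ni) (Fin nf ⊕ Fin ni) ℝ) p q) := by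
    rintro (p | p) (q | q)
    · simp only [Matrix.fromBlocks_apply₁₁]
      refine ⟨continuous_mexp_entry J p q, C, fun t ht => ?_⟩
      exact le_trans (abs_entry_le_opNorm _ p q) (hJ t ht)
    all_goals simpa using GoodFun.zero (α := α)
  have goodFJ : ∀ a b : Fin nf ⊕ Fin ni, GoodFun α (fun t => FJ t a b) := by
    intro a b
    have he : (fun t => FJ t a b)
        = fun t => ∑ q, (∑ p, Tinv a p *
            (fromBlocks (mexp (t • J)) 0 0 0 : Matrix (Fin nf ⊕ Fin ni) (Fin nf ⊕ Fin ni) ℝ) p q)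
              * Winv q b := by
      funext t
      rw [hFJ, Matrix.mul_apply]
      exact Finset.sum_congr rfl fun q _ => by rw [Matrix.mul_apply]
    rw [he]
    exact GoodFun.sum _ _ (fun q _ => (GoodFun.sum _ _
      (fun p _ => (goodX p q).const_mul _)).mul_const _)
  have goodU : ∀ (i : Fin m) (p : Fin nf ⊕ Fin ni),
      GoodFun α (fun t => (Bᵀ * (FJ t)ᵀ * M) i p) := by
    intro i p
    have he : (fun t => (Bᵀ * (FJ t)ᵀ * M) i p)
        = fun t => ∑ q, (∑ a, Bᵀ i a * FJ t q a) * M q p := by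
      funext t
      simp only [Matrix.mul_apply, Matrix.transpose_apply]
    rw [he]
    exact GoodFun.sum _ _ fun q _ => (GoodFun.sum _ _
      (fun a _ => (goodFJ q a).const_mul _)).mul_const _
  have goodV : ∀ (p : Fin nf ⊕ Fin ni) (j : Fin m),
      GoodFun α (fun t => (FJ t * B) p j) := by
    intro p j
    have he : (fun t => (FJ t * B) p j) = fun t => ∑ a, FJ t p a * B a j := by
      funext t; rw [Matrix.mul_apply]
    rw [he]
    exact GoodFun.sum _ _ fun a _ => (goodFJ p a).mul_const _
  have hSv : ∀ (t : ℝ) (p q : Fin nf ⊕ Fin ni),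
      (FJ t * B * Bᵀ * (FJ t)ᵀ) p q = ∑ j, (FJ t * B) p j * (FJ t * B) q j := by
    intro t p q
    have h : FJ t * B * Bᵀ * (FJ t)ᵀ = (FJ t * B) * (FJ t * B)ᵀ := by
      rw [Matrix.transpose_mul, Matrix.mul_assoc]
    rw [h, Matrix.mul_apply]
    exact Finset.sum_congr rfl fun j _ => by rw [Matrix.transpose_apply]
  have intS : ∀ (p q : Fin nf ⊕ Fin ni),
      MeasureTheory.IntegrableOn (fun t => (FJ t * B * Bᵀ * (FJ t)ᵀ) p q) (Set.Ioi 0) := by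
    intro p q
    have he : (fun t => (FJ t * B * Bᵀ * (FJ t)ᵀ) p q)
        = fun t => ∑ j, (FJ t * B) p j * (FJ t * B) q j := funext fun t => hSv t p q
    rw [he]
    exact MeasureTheory.integrable_finset_sum _ fun j _ =>
      GoodFun.integrableOn_mul hα (goodV p j) (goodV q j)
  have hPpS : ∀ p q : Fin nf ⊕ Fin ni,
      Pp p q = ∫ t in Set.Ioi (0:ℝ), (FJ t * B * Bᵀ * (FJ t)ᵀ) p q := by
    intro p q; rw [hPp]; rfl
  have hPpSymm : ∀ p q : Fin nf ⊕ Fin ni, Pp q p = Pp p q := by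
    intro p q
    rw [hPpS, hPpS]
    have h : (fun t => (FJ t * B * Bᵀ * (FJ t)ᵀ) q p)
        = fun t => (FJ t * B * Bᵀ * (FJ t)ᵀ) p q := by
      funext t
      rw [hSv, hSv]
      exact Finset.sum_congr rfl fun j _ => mul_comm _ _
    rw [h]
  -- the kernel identity
  have key : ∀ t1 t2 : ℝ, enormSq (hpp t1 t2)
      = ∑ p, ∑ q, (∑ i, (Bᵀ * (FJ t1)ᵀ * M) i p * (Bᵀ * (FJ t1)ᵀ * M) i q)
          * ((FJ t2 * B * Bᵀ * (FJ t2)ᵀ) p q) := by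
    intro t1 t2
    rw [hhpp]
    have hUV : Bᵀ * (FJ t1)ᵀ * M * FJ t2 * B = (Bᵀ * (FJ t1)ᵀ * M) * (FJ t2 * B) := by
      rw [Matrix.mul_assoc]
    rw [hUV]
    simp only [enormSq, vecm, Fintype.sum_prod_type, hSv]
    set U := Bᵀ * (FJ t1)ᵀ * M with hU
    set V := FJ t2 * B with hV
    simp only [Matrix.mul_apply, pow_two, Finset.sum_mul_sum]
    rw [sum4_swap]
    refine Finset.sum_congr rfl fun p _ => Finset.sum_congr rfl fun q _ =>
      Finset.sum_congr rfl fun i _ => Finset.sum_congr rfl fun j _ => by ring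
  -- inner integral
  have inner : ∀ t1 : ℝ, (∫ t2 in Set.Ioi (0:ℝ), enormSq (hpp t1 t2))
      = ∑ p, ∑ q, (∑ i, (Bᵀ * (FJ t1)ᵀ * M) i p * (Bᵀ * (FJ t1)ᵀ * M) i q) * Pp p q := by
    intro t1
    have hint : ∀ p q : Fin nf ⊕ Fin ni,
        MeasureTheory.Integrable
          (fun t2 => (∑ i, (Bᵀ * (FJ t1)ᵀ * M) i p * (Bᵀ * (FJ t1)ᵀ * M) i q)
            * (FJ t2 * B * Bᵀ * (FJ t2)ᵀ) p q)
          (MeasureTheory.volume.restrict (Set.Ioi 0)) :=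
      fun p q => (intS p q).const_mul _
    simp only [key t1]
    rw [MeasureTheory.integral_finset_sum _ (fun p _ =>
      MeasureTheory.integrable_finset_sum _ (fun q _ => hint p q))]
    refine Finset.sum_congr rfl fun p _ => ?_
    rw [MeasureTheory.integral_finset_sum _ (fun q _ => hint p q)]
    refine Finset.sum_congr rfl fun q _ => ?_
    rw [MeasureTheory.integral_const_mul, ← hPpS]
  -- integral of the t1-coefficients
  have hcS : ∀ (t : ℝ) (p q : Fin nf ⊕ Fin ni),
      (∑ i, (Bᵀ * (FJ t)ᵀ * M) i p * (Bᵀ * (FJ t)ᵀ * M) i q)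
        = (M * (FJ t * B * Bᵀ * (FJ t)ᵀ) * M) p q := by
    intro t p q
    have huS : (Bᵀ * (FJ t)ᵀ * M)ᵀ * (Bᵀ * (FJ t)ᵀ * M)
        = M * (FJ t * B * Bᵀ * (FJ t)ᵀ) * M := by
      rw [Matrix.transpose_mul, Matrix.transpose_mul, Matrix.transpose_transpose,
        Matrix.transpose_transpose, hM.eq]
      simp only [Matrix.mul_assoc]
    rw [← huS, Matrix.mul_apply]
    exact Finset.sum_congr rfl fun i _ => by rw [Matrix.transpose_apply]
  have hMint : ∀ p q : Fin nf ⊕ Fin ni,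
      (∫ t in Set.Ioi (0:ℝ), (M * (FJ t * B * Bᵀ * (FJ t)ᵀ) * M) p q)
        = (M * Pp * M) p q := by
    intro p q
    have he : (fun t => (M * (FJ t * B * Bᵀ * (FJ t)ᵀ) * M) p q)
        = fun t => ∑ a, ∑ b, (M p b * M a q) * (FJ t * B * Bᵀ * (FJ t)ᵀ) b a := by
      funext t
      rw [Matrix.mul_apply]
      refine Finset.sum_congr rfl fun a _ => ?_
      rw [Matrix.mul_apply, Finset.sum_mul]
      exact Finset.sum_congr rfl fun b _ => by ring
    rw [he, MeasureTheory.integral_finset_sum _ (fun a _ =>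
      MeasureTheory.integrable_finset_sum _ fun b _ => (intS b a).const_mul _)]
    have h2 : (M * Pp * M) p q = ∑ a, ∑ b, (M p b * M a q) * Pp b a := by
      rw [Matrix.mul_apply]
      refine Finset.sum_congr rfl fun a _ => ?_
      rw [Matrix.mul_apply, Finset.sum_mul]
      exact Finset.sum_congr rfl fun b _ => by ring
    rw [h2]
    refine Finset.sum_congr rfl fun a _ => ?_
    rw [MeasureTheory.integral_finset_sum _ (fun b _ => (intS b a).const_mul _)]
    refine Finset.sum_congr rfl fun b _ => ?_
    rw [MeasureTheory.integral_const_mul, ← hPpS]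
  have cInt : ∀ p q : Fin nf ⊕ Fin ni,
      MeasureTheory.IntegrableOn
        (fun t => ∑ i, (Bᵀ * (FJ t)ᵀ * M) i p * (Bᵀ * (FJ t)ᵀ * M) i q) (Set.Ioi 0) :=
    fun p q => MeasureTheory.integrable_finset_sum _ fun i _ =>
      GoodFun.integrableOn_mul hα (goodU i p) (goodU i q)
  calc (∫ t1 in Set.Ioi (0:ℝ), ∫ t2 in Set.Ioi (0:ℝ), enormSq (hpp t1 t2))
      = ∫ t1 in Set.Ioi (0:ℝ), ∑ p, ∑ q,
          (∑ i, (Bᵀ * (FJ t1)ᵀ * M) i p * (Bᵀ * (FJ t1)ᵀ * M) i q) * Pp p q := by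
        simp only [inner]
    _ = ∑ p, ∑ q, (∫ t1 in Set.Ioi (0:ℝ),
          ∑ i, (Bᵀ * (FJ t1)ᵀ * M) i p * (Bᵀ * (FJ t1)ᵀ * M) i q) * Pp p q := by
        refine (MeasureTheory.integral_finset_sum _ (fun p _ =>
          MeasureTheory.integrable_finset_sum _ fun q _ => (cInt p q).mul_const _)).trans ?_
        refine Finset.sum_congr rfl fun p _ => ?_
        refine (MeasureTheory.integral_finset_sum _ (fun q _ => (cInt p q).mul_const _)).trans ?_
        exact Finset.sum_congr rfl fun q _ => by rw [MeasureTheory.integral_mul_const]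
    _ = ∑ p, ∑ q, (M * Pp * M) p q * Pp p q := by
        refine Finset.sum_congr rfl fun p _ => Finset.sum_congr rfl fun q _ => ?_
        congr 1
        rw [← hMint p q]
        exact congrArg _ (funext fun t => hcS t p q)
    _ = Matrix.trace (Pp * M * Pp * M) := by
        rw [show Pp * M * Pp * M = Pp * (M * Pp * M) by simp only [Matrix.mul_assoc],
          Matrix.trace_mul_comm, Matrix.trace]
        simp only [Matrix.diag_apply, Matrix.mul_apply]
        exact Finset.sum_congr rfl fun p _ => Finset.sum_congr rfl fun q _ => by
          rw [hPpSymm p q]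
end

section
/- The cross term of the proper-proper kernels satisfies ∫₀^∞∫₀^∞ ⟨h_pp(t₁,t₂), ĥ_pp(t₁,t₂)⟩ dt₁ dt₂ = trace(P̃_p^T·M·P̃_p·M̂), where P̃_p := ∫₀^∞ F_J(t)·B·B̂^T·F̂_J(t)^T dt and ⟨·,·⟩ is the Euclidean inner product on ℝ^{m²}. -/
open MeasureTheory Matrix

lemma aux_mexp_continuous {d : ℕ} (X : Matrix (Fin d) (Fin d) ℝ) :
    Continuous fun t : ℝ => mexp (t • X) := by
  letI := Matrix.instL2OpNormedRing (n := Fin d) (𝕜 := ℝ)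
  letI := Matrix.instL2OpNormedAlgebra (n := Fin d) (𝕜 := ℝ)
  letI : NormedAlgebra ℚ (Matrix (Fin d) (Fin d) ℝ) := .restrictScalars ℚ ℝ _
  have h : Continuous (NormedSpace.exp : Matrix (Fin d) (Fin d) ℝ → _) :=
    NormedSpace.exp_continuous
  exact h.comp (continuous_id.smul continuous_const)

lemma aux_entry_le_opNorm {d e : ℕ} (X : Matrix (Fin d) (Fin e) ℝ) (a : Fin d) (b : Fin e) :
    |X a b| ≤ opNorm X := by
  letI := Matrix.instL2OpNormedAddCommGroup (m := Fin d) (n := Fin e) (𝕜 := ℝ)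
  have h := Matrix.l2_opNorm_mulVec X (EuclideanSpace.single b (1:ℝ))
  set v : EuclideanSpace ℝ (Fin d) :=
    (EuclideanSpace.equiv (Fin d) ℝ).symm (X *ᵥ (EuclideanSpace.single b (1:ℝ))) with hv
  have hva : v a = X a b := by
    show (X *ᵥ (Pi.single b (1:ℝ))) a = X a b
    simp [Matrix.mulVec_single]
  have h1 : |v a| ≤ ‖v‖ := by
    have := abs_real_inner_le_norm (EuclideanSpace.single a (1:ℝ)) v
    simpa [EuclideanSpace.inner_single_left] using this
  have h2 : ‖v‖ ≤ ‖X‖ * 1 := by simpa using h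
  calc |X a b| = |v a| := by rw [hva]
    _ ≤ ‖v‖ := h1
    _ ≤ ‖X‖ * 1 := h2
    _ = opNorm X := by rw [mul_one]; rfl

lemma aux_trace_mul_eq_sum {a b : Type*} [Fintype a] [Fintype b]
    (U : Matrix a b ℝ) (V : Matrix b a ℝ) :
    Matrix.trace (U * V) = ∑ s : a × b, U s.1 s.2 * V s.2 s.1 := by
  simp [Matrix.trace, Matrix.diag, Matrix.mul_apply, Fintype.sum_prod_type]

lemma aux_dotv_vecm {m : ℕ} (X Y : Matrix (Fin m) (Fin m) ℝ) :
    dotv (vecm X) (vecm Y) = Matrix.trace (Xᵀ * Y) := by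
  simp only [dotv, vecm, Matrix.trace, Matrix.diag, Matrix.mul_apply,
    Matrix.transpose_apply, Fintype.sum_prod_type]
  exact Finset.sum_comm

lemma aux_dot_trace {n r mm : Type*} [Fintype n] [Fintype r] [Fintype mm]
    (M : Matrix n n ℝ) (hMs : Mᵀ = M) (Mr : Matrix r r ℝ)
    (F1 F2 : Matrix n n ℝ) (Fr1 Fr2 : Matrix r r ℝ)
    (B : Matrix n mm ℝ) (Br : Matrix r mm ℝ) :
    Matrix.trace ((Bᵀ * F1ᵀ * M * F2 * B)ᵀ * (Brᵀ * Fr1ᵀ * Mr * Fr2 * Br)) =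
    Matrix.trace ((M * (F1 * B * Brᵀ * Fr1ᵀ) * Mr) * (F2 * B * Brᵀ * Fr2ᵀ)ᵀ) := by
  have e1 : (Bᵀ * F1ᵀ * M * F2 * B)ᵀ * (Brᵀ * Fr1ᵀ * Mr * Fr2 * Br) =
      (Bᵀ * F2ᵀ) * ((M * (F1 * B * Brᵀ * Fr1ᵀ) * Mr) * (Fr2 * Br)) := by
    simp only [Matrix.transpose_mul, Matrix.transpose_transpose, hMs, Matrix.mul_assoc]
  have e2 : (M * (F1 * B * Brᵀ * Fr1ᵀ) * Mr) * (Fr2 * Br) * (Bᵀ * F2ᵀ) =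
      (M * (F1 * B * Brᵀ * Fr1ᵀ) * Mr) * (F2 * B * Brᵀ * Fr2ᵀ)ᵀ := by
    simp only [Matrix.transpose_mul, Matrix.transpose_transpose, Matrix.mul_assoc]
  rw [e1, Matrix.trace_mul_comm, e2]

lemma aux_cycle1 {n r : Type*} [Fintype n] [Fintype r]
    (M : Matrix n n ℝ) (Mr : Matrix r r ℝ) (P Q : Matrix n r ℝ) :
    Matrix.trace ((M * P * Mr) * Qᵀ) = Matrix.trace (P * (Mr * Qᵀ * M)) := by
  rw [show (M * P * Mr) * Qᵀ = M * (P * (Mr * Qᵀ)) by simp only [Matrix.mul_assoc],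
    Matrix.trace_mul_comm]
  simp only [Matrix.mul_assoc]

lemma aux_cycle2 {n r : Type*} [Fintype n] [Fintype r]
    (M : Matrix n n ℝ) (Mr : Matrix r r ℝ) (P : Matrix n r ℝ) :
    Matrix.trace (P * (Mr * Pᵀ * M)) = Matrix.trace (Pᵀ * M * P * Mr) := by
  rw [Matrix.trace_mul_comm,
    show (Mr * Pᵀ * M) * P = Mr * (Pᵀ * M * P) by simp only [Matrix.mul_assoc],
    Matrix.trace_mul_comm]


set_option maxHeartbeats 1000000 in
/-- The cross term of the proper-proper kernels satisfies
`∫₀^∞∫₀^∞ ⟨h_pp, ĥ_pp⟩ dt₁ dt₂ = trace(P̃_pᵀ·M·P̃_p·M̂)` with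
`P̃_p = ∫₀^∞ F_J(t)·B·B̂ᵀ·F̂_J(t)ᵀ dt`. -/
theorem proper_proper_kernel_cross_term_eq_trace
    {nf ni m : ℕ} (hm : 0 < m) (ν : ℕ) (hν : 0 < ν)
    -- Weierstraß canonical form data for the full-order system
    (W T Winv Tinv : Matrix (Fin nf ⊕ Fin ni) (Fin nf ⊕ Fin ni) ℝ)
    (hW : W * Winv = 1) (hW' : Winv * W = 1)
    (hT : T * Tinv = 1) (hT' : Tinv * T = 1)
    (J : Matrix (Fin nf) (Fin nf) ℝ) (N : Matrix (Fin ni) (Fin ni) ℝ) (hN : N ^ ν = 0)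
    (C α : ℝ) (hC : 0 < C) (hα : 0 < α)
    (hJ : ∀ t : ℝ, 0 ≤ t → opNorm (mexp (t • J)) ≤ C * Real.exp (-α * t))
    (E A : Matrix (Fin nf ⊕ Fin ni) (Fin nf ⊕ Fin ni) ℝ)
    (hE : E = W * fromBlocks 1 0 0 N * T)
    (hA : A = W * fromBlocks J 0 0 1 * T)
    (B : Matrix (Fin nf ⊕ Fin ni) (Fin m) ℝ)
    (M : Matrix (Fin nf ⊕ Fin ni) (Fin nf ⊕ Fin ni) ℝ) (hM : M.IsSymm)
    -- spectral projectors
    (Pr Pl : Matrix (Fin nf ⊕ Fin ni) (Fin nf ⊕ Fin ni) ℝ)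
    (hPr : Pr = Tinv * fromBlocks 1 0 0 0 * T)
    (hPl : Pl = W * fromBlocks 1 0 0 0 * Winv)
    -- fundamental solution matrices
    (FJ : ℝ → Matrix (Fin nf ⊕ Fin ni) (Fin nf ⊕ Fin ni) ℝ)
    (hFJ : ∀ t : ℝ, FJ t = Tinv * fromBlocks (mexp (t • J)) 0 0 0 * Winv)
    (FN : ℕ → Matrix (Fin nf ⊕ Fin ni) (Fin nf ⊕ Fin ni) ℝ)
    (hFN : ∀ k : ℕ, FN k = Tinv * fromBlocks 0 0 0 (-(N ^ k)) * Winv)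
    -- proper and improper controllability Gramians
    (Pp : Matrix (Fin nf ⊕ Fin ni) (Fin nf ⊕ Fin ni) ℝ)
    (hPp : Pp = matIntIoi fun t => FJ t * B * Bᵀ * (FJ t)ᵀ)
    (Pimp : Matrix (Fin nf ⊕ Fin ni) (Fin nf ⊕ Fin ni) ℝ)
    (hPimp : Pimp = ∑ k ∈ Finset.range ν, FN k * B * Bᵀ * (FN k)ᵀ)
    -- reduced-order data
    {rf ri : ℕ}
    (A1r : Matrix (Fin rf) (Fin rf) ℝ) (E2r : Matrix (Fin ri) (Fin ri) ℝ) (hE2r : E2r ^ ν = 0)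
    (Cr αr : ℝ) (hCr : 0 < Cr) (hαr : 0 < αr)
    (hA1r : ∀ t : ℝ, 0 ≤ t → opNorm (mexp (t • A1r)) ≤ Cr * Real.exp (-αr * t))
    (Br : Matrix (Fin rf ⊕ Fin ri) (Fin m) ℝ)
    (Mr : Matrix (Fin rf ⊕ Fin ri) (Fin rf ⊕ Fin ri) ℝ) (hMr : Mr.IsSymm)
    (FJr : ℝ → Matrix (Fin rf ⊕ Fin ri) (Fin rf ⊕ Fin ri) ℝ)
    (hFJr : ∀ t : ℝ, FJr t = fromBlocks (mexp (t • A1r)) 0 0 0)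
    (FNr : ℕ → Matrix (Fin rf ⊕ Fin ri) (Fin rf ⊕ Fin ri) ℝ)
    (hFNr : ∀ k : ℕ, FNr k = fromBlocks 0 0 0 (-(E2r ^ k)))
    -- proper-proper kernels of the full-order and reduced-order systems
    (hpp : ℝ → ℝ → Fin m × Fin m → ℝ)
    (hhpp : ∀ t1 t2 : ℝ, hpp t1 t2 = vecm (Bᵀ * (FJ t1)ᵀ * M * FJ t2 * B))
    (hppr : ℝ → ℝ → Fin m × Fin m → ℝ)
    (hhppr : ∀ t1 t2 : ℝ, hppr t1 t2 = vecm (Brᵀ * (FJr t1)ᵀ * Mr * FJr t2 * Br))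
    -- the mixed proper Gramian
    (Ptp : Matrix (Fin nf ⊕ Fin ni) (Fin rf ⊕ Fin ri) ℝ)
    (hPtp : Ptp = matIntIoi fun t => FJ t * B * Brᵀ * (FJr t)ᵀ) :
    (∫ t1 in Set.Ioi (0:ℝ), ∫ t2 in Set.Ioi (0:ℝ), dotv (hpp t1 t2) (hppr t1 t2)) =
      Matrix.trace (Ptpᵀ * M * Ptp * Mr) := by
  classical
  have hPtpE : ∀ a b, Ptp a b =
      ∫ t in Set.Ioi (0:ℝ), (FJ t * B * Brᵀ * (FJr t)ᵀ) a b := by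
    intro a b; rw [hPtp]; simp only [matIntIoi, Matrix.of_apply]
  -- continuity
  have hFJc : Continuous FJ := by
    have he : FJ = fun t => Tinv * fromBlocks (mexp (t • J)) 0 0 0 * Winv := funext hFJ
    rw [he]
    exact Continuous.matrix_mul (Continuous.matrix_mul continuous_const
      (Continuous.matrix_fromBlocks (aux_mexp_continuous J) continuous_const
        continuous_const continuous_const)) continuous_const
  have hFJrc : Continuous FJr := by
    have he : FJr = fun t => fromBlocks (mexp (t • A1r)) 0 0 0 := funext hFJr
    rw [he]
    exact Continuous.matrix_fromBlocks (aux_mexp_continuous A1r) continuous_const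
      continuous_const continuous_const
  have hGc : ∀ a i, Continuous fun t : ℝ => (FJ t * B) a i := fun a i =>
    (hFJc.matrix_mul continuous_const).matrix_elem a i
  have hGrc : ∀ b i, Continuous fun t : ℝ => (FJr t * Br) b i := fun b i =>
    (hFJrc.matrix_mul continuous_const).matrix_elem b i
  -- entry bounds for the block matrices
  have hFb : ∀ t : ℝ, 0 ≤ t → ∀ u v,
      |(fromBlocks (mexp (t • J)) 0 0 0 : Matrix (Fin nf ⊕ Fin ni) (Fin nf ⊕ Fin ni) ℝ) u v|
        ≤ C * Real.exp (-α * t) := by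
    intro t ht u v
    have hpos : (0:ℝ) ≤ C * Real.exp (-α * t) := by positivity
    cases u with
    | inl u =>
      cases v with
      | inl v => exact le_trans (aux_entry_le_opNorm _ u v) (hJ t ht)
      | inr v => simpa [Matrix.fromBlocks] using hpos
    | inr u => cases v with
      | inl v => simpa [Matrix.fromBlocks] using hpos
      | inr v => simpa [Matrix.fromBlocks] using hpos
  have hFrb : ∀ t : ℝ, 0 ≤ t → ∀ u v,
      |(fromBlocks (mexp (t • A1r)) 0 0 0 : Matrix (Fin rf ⊕ Fin ri) (Fin rf ⊕ Fin ri) ℝ) u v|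
        ≤ Cr * Real.exp (-αr * t) := by
    intro t ht u v
    have hpos : (0:ℝ) ≤ Cr * Real.exp (-αr * t) := by positivity
    cases u with
    | inl u =>
      cases v with
      | inl v => exact le_trans (aux_entry_le_opNorm _ u v) (hA1r t ht)
      | inr v => simpa [Matrix.fromBlocks] using hpos
    | inr u => cases v with
      | inl v => simpa [Matrix.fromBlocks] using hpos
      | inr v => simpa [Matrix.fromBlocks] using hpos
  -- entry bounds for FJ t * B and FJr t * Br
  have hGb : ∀ a i (t : ℝ), 0 ≤ t → |(FJ t * B) a i| ≤
      (∑ u, ∑ v, |Tinv a u| * |(Winv * B) v i|) * (C * Real.exp (-α * t)) := by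
    intro a i t ht
    have hent : (FJ t * B) a i = ∑ u, ∑ v, Tinv a u *
        ((fromBlocks (mexp (t • J)) 0 0 0 :
          Matrix (Fin nf ⊕ Fin ni) (Fin nf ⊕ Fin ni) ℝ) u v * (Winv * B) v i) := by
      rw [hFJ]
      have hassoc : Tinv * fromBlocks (mexp (t • J)) 0 0 0 * Winv * B =
          Tinv * ((fromBlocks (mexp (t • J)) 0 0 0 :
            Matrix (Fin nf ⊕ Fin ni) (Fin nf ⊕ Fin ni) ℝ) * (Winv * B)) := by
        simp only [Matrix.mul_assoc]
      rw [hassoc]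
      simp [Matrix.mul_apply, Finset.mul_sum]
    rw [hent]
    calc |∑ u, ∑ v, Tinv a u *
        ((fromBlocks (mexp (t • J)) 0 0 0 :
          Matrix (Fin nf ⊕ Fin ni) (Fin nf ⊕ Fin ni) ℝ) u v * (Winv * B) v i)|
        ≤ ∑ u, ∑ v, |Tinv a u *
            ((fromBlocks (mexp (t • J)) 0 0 0 :
              Matrix (Fin nf ⊕ Fin ni) (Fin nf ⊕ Fin ni) ℝ) u v * (Winv * B) v i)| := by
          refine (Finset.abs_sum_le_sum_abs _ _).trans ?_
          exact Finset.sum_le_sum fun u _ => Finset.abs_sum_le_sum_abs _ _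
      _ ≤ ∑ u, ∑ v, |Tinv a u| * ((C * Real.exp (-α * t)) * |(Winv * B) v i|) := by
          refine Finset.sum_le_sum fun u _ => Finset.sum_le_sum fun v _ => ?_
          rw [abs_mul, abs_mul]
          exact mul_le_mul_of_nonneg_left
            (mul_le_mul_of_nonneg_right (hFb t ht u v) (abs_nonneg _)) (abs_nonneg _)
      _ = (∑ u, ∑ v, |Tinv a u| * |(Winv * B) v i|) * (C * Real.exp (-α * t)) := by
          rw [Finset.sum_mul]
          refine Finset.sum_congr rfl fun u _ => ?_
          rw [Finset.sum_mul]
          exact Finset.sum_congr rfl fun v _ => by ring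
  have hGrb : ∀ b i (t : ℝ), 0 ≤ t → |(FJr t * Br) b i| ≤
      (∑ v, |Br v i|) * (Cr * Real.exp (-αr * t)) := by
    intro b i t ht
    have hent : (FJr t * Br) b i = ∑ v,
        (fromBlocks (mexp (t • A1r)) 0 0 0 :
          Matrix (Fin rf ⊕ Fin ri) (Fin rf ⊕ Fin ri) ℝ) b v * Br v i := by
      rw [hFJr]; simp [Matrix.mul_apply]
    rw [hent]
    calc |∑ v, (fromBlocks (mexp (t • A1r)) 0 0 0 :
          Matrix (Fin rf ⊕ Fin ri) (Fin rf ⊕ Fin ri) ℝ) b v * Br v i|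
        ≤ ∑ v, |(fromBlocks (mexp (t • A1r)) 0 0 0 :
            Matrix (Fin rf ⊕ Fin ri) (Fin rf ⊕ Fin ri) ℝ) b v * Br v i| :=
          Finset.abs_sum_le_sum_abs _ _
      _ ≤ ∑ v, (Cr * Real.exp (-αr * t)) * |Br v i| := by
          refine Finset.sum_le_sum fun v _ => ?_
          rw [abs_mul]
          exact mul_le_mul_of_nonneg_right (hFrb t ht b v) (abs_nonneg _)
      _ = (∑ v, |Br v i|) * (Cr * Real.exp (-αr * t)) := by
          rw [Finset.sum_mul]
          exact Finset.sum_congr rfl fun v _ => by ring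
  -- integrability of entry products
  have hprod_int : ∀ a b i, IntegrableOn
      (fun t => (FJ t * B) a i * (FJr t * Br) b i) (Set.Ioi (0:ℝ)) := by
    intro a b i
    set K1 : ℝ := ∑ u, ∑ v, |Tinv a u| * |(Winv * B) v i| with hK1d
    set K2 : ℝ := ∑ v, |Br v i| with hK2d
    have hK1 : 0 ≤ K1 := by positivity
    have hK2 : 0 ≤ K2 := by positivity
    refine Integrable.mono'
      (g := fun t => (K1 * K2 * (C * Cr)) * Real.exp (-(α + αr) * t)) ?_ ?_ ?_
    · exact ((exp_neg_integrableOn_Ioi 0 (by positivity : (0:ℝ) < α + αr)).const_mul _)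
    · exact ((hGc a i).mul (hGrc b i)).aestronglyMeasurable
    · filter_upwards [MeasureTheory.ae_restrict_mem measurableSet_Ioi] with t ht
      have ht' : (0:ℝ) ≤ t := le_of_lt ht
      rw [Real.norm_eq_abs, abs_mul]
      calc |(FJ t * B) a i| * |(FJr t * Br) b i|
          ≤ (K1 * (C * Real.exp (-α * t))) * (K2 * (Cr * Real.exp (-αr * t))) :=
            mul_le_mul (hGb a i t ht') (hGrb b i t ht') (abs_nonneg _) (by positivity)
        _ = (K1 * K2 * (C * Cr)) * Real.exp (-(α + αr) * t) := by
            rw [show (-(α + αr) * t) = (-α * t) + (-αr * t) by ring, Real.exp_add]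
            ring
  -- integrability of the entries of the mixed Gramian integrand
  have hΦint : ∀ a b, IntegrableOn
      (fun t => (FJ t * B * Brᵀ * (FJr t)ᵀ) a b) (Set.Ioi (0:ℝ)) := by
    intro a b
    have hfe : (fun t => (FJ t * B * Brᵀ * (FJr t)ᵀ) a b) =
        fun t => ∑ i, (FJ t * B) a i * (FJr t * Br) b i := by
      funext t
      have h1 : FJ t * B * Brᵀ * (FJr t)ᵀ = (FJ t * B) * (FJr t * Br)ᵀ := by
        simp only [Matrix.transpose_mul, Matrix.mul_assoc]
      rw [h1, Matrix.mul_apply]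
      exact Finset.sum_congr rfl fun i _ => by rw [Matrix.transpose_apply]
    rw [hfe]
    exact integrable_finset_sum _ fun i _ => hprod_int a b i
  have hMs : Mᵀ = M := hM
  -- the pointwise identity for the integrand
  have hdot : ∀ t1 t2 : ℝ, dotv (hpp t1 t2) (hppr t1 t2) =
      ∑ s : (Fin nf ⊕ Fin ni) × (Fin rf ⊕ Fin ri),
        (M * (FJ t1 * B * Brᵀ * (FJr t1)ᵀ) * Mr) s.1 s.2 *
          (FJ t2 * B * Brᵀ * (FJr t2)ᵀ) s.1 s.2 := by
    intro t1 t2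
    rw [hhpp, hhppr, aux_dotv_vecm, aux_dot_trace M hMs Mr (FJ t1) (FJ t2) (FJr t1)
      (FJr t2) B Br, aux_trace_mul_eq_sum]
    exact Finset.sum_congr rfl fun s _ => by rw [Matrix.transpose_apply]
  -- inner integral
  have hinner : ∀ t1 : ℝ, (∫ t2 in Set.Ioi (0:ℝ), dotv (hpp t1 t2) (hppr t1 t2))
      = Matrix.trace ((FJ t1 * B * Brᵀ * (FJr t1)ᵀ) * (Mr * Ptpᵀ * M)) := by
    intro t1
    calc (∫ t2 in Set.Ioi (0:ℝ), dotv (hpp t1 t2) (hppr t1 t2))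
        = ∫ t2 in Set.Ioi (0:ℝ), ∑ s : (Fin nf ⊕ Fin ni) × (Fin rf ⊕ Fin ri),
            (M * (FJ t1 * B * Brᵀ * (FJr t1)ᵀ) * Mr) s.1 s.2 *
              (FJ t2 * B * Brᵀ * (FJr t2)ᵀ) s.1 s.2 := by
          simp only [hdot]
      _ = ∑ s : (Fin nf ⊕ Fin ni) × (Fin rf ⊕ Fin ri),
            ∫ t2 in Set.Ioi (0:ℝ),
              (M * (FJ t1 * B * Brᵀ * (FJr t1)ᵀ) * Mr) s.1 s.2 *
                (FJ t2 * B * Brᵀ * (FJr t2)ᵀ) s.1 s.2 :=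
          integral_finset_sum _ fun s _ => (hΦint s.1 s.2).const_mul _
      _ = ∑ s : (Fin nf ⊕ Fin ni) × (Fin rf ⊕ Fin ri),
            (M * (FJ t1 * B * Brᵀ * (FJr t1)ᵀ) * Mr) s.1 s.2 * Ptp s.1 s.2 := by
          refine Finset.sum_congr rfl fun s _ => ?_
          rw [integral_const_mul, ← hPtpE]
      _ = Matrix.trace ((M * (FJ t1 * B * Brᵀ * (FJr t1)ᵀ) * Mr) * Ptpᵀ) := by
          rw [aux_trace_mul_eq_sum]
          exact Finset.sum_congr rfl fun s _ => by rw [Matrix.transpose_apply]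
      _ = Matrix.trace ((FJ t1 * B * Brᵀ * (FJr t1)ᵀ) * (Mr * Ptpᵀ * M)) :=
          aux_cycle1 M Mr _ Ptp
  -- outer integral
  calc (∫ t1 in Set.Ioi (0:ℝ), ∫ t2 in Set.Ioi (0:ℝ), dotv (hpp t1 t2) (hppr t1 t2))
      = ∫ t1 in Set.Ioi (0:ℝ),
          Matrix.trace ((FJ t1 * B * Brᵀ * (FJr t1)ᵀ) * (Mr * Ptpᵀ * M)) := by
        simp only [hinner]
    _ = ∫ t1 in Set.Ioi (0:ℝ), ∑ s : (Fin nf ⊕ Fin ni) × (Fin rf ⊕ Fin ri),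
          (FJ t1 * B * Brᵀ * (FJr t1)ᵀ) s.1 s.2 * (Mr * Ptpᵀ * M) s.2 s.1 := by
        simp only [aux_trace_mul_eq_sum]
    _ = ∑ s : (Fin nf ⊕ Fin ni) × (Fin rf ⊕ Fin ri),
          ∫ t1 in Set.Ioi (0:ℝ),
            (FJ t1 * B * Brᵀ * (FJr t1)ᵀ) s.1 s.2 * (Mr * Ptpᵀ * M) s.2 s.1 :=
        integral_finset_sum _ fun s _ => (hΦint s.1 s.2).mul_const _
    _ = ∑ s : (Fin nf ⊕ Fin ni) × (Fin rf ⊕ Fin ri),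
          Ptp s.1 s.2 * (Mr * Ptpᵀ * M) s.2 s.1 := by
        refine Finset.sum_congr rfl fun s _ => ?_
        rw [integral_mul_const, ← hPtpE]
    _ = Matrix.trace (Ptp * (Mr * Ptpᵀ * M)) := (aux_trace_mul_eq_sum _ _).symm
    _ = Matrix.trace (Ptpᵀ * M * Ptp * Mr) := aux_cycle2 M Mr Ptp
end

section
/- For every t ≥ 0 the improper-proper output error satisfies |y_ip(t) − ŷ_ip(t)| ≤ (∫₀^∞ Σ_{k=0}^{ν−1} ‖h_ip(s,k) − ĥ_ip(s,k)‖₂² ds)^{1/2} · (∫₀ᵗ Σ_{k=0}^{ν−1} ‖u(τ) ⊗ u^{(k)}(t)‖₂² dτ)^{1/2}. -/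
open MeasureTheory Matrix

lemma opNorm_nonneg' {d e : ℕ} (X : Matrix (Fin d) (Fin e) ℝ) : 0 ≤ opNorm X := by
  letI := Matrix.instL2OpNormedAddCommGroup (m := Fin d) (n := Fin e) (𝕜 := ℝ)
  exact norm_nonneg X

lemma mul_fromBlocks_mul_entry {a b : ℕ} {ι κ : Type*} [Fintype ι] [Fintype κ]
    (L : Matrix ι (Fin a ⊕ Fin b) ℝ) (Y : Matrix (Fin a) (Fin a) ℝ)
    (R : Matrix (Fin a ⊕ Fin b) κ ℝ) (i : ι) (j : κ) :
    (L * fromBlocks Y 0 0 (0 : Matrix (Fin b) (Fin b) ℝ) * R) i j =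
      ∑ p : Fin a, ∑ q : Fin a, L i (Sum.inl p) * Y p q * R (Sum.inl q) j := by
  simp only [Matrix.mul_apply, Fintype.sum_sum_type, Matrix.fromBlocks_apply₁₁,
    Matrix.fromBlocks_apply₁₂, Matrix.fromBlocks_apply₂₁, Matrix.fromBlocks_apply₂₂,
    Matrix.zero_apply, mul_zero, zero_mul, Finset.sum_const_zero, add_zero, zero_add,
    Finset.sum_mul]
  rw [Finset.sum_comm]

lemma abs_mul_fromBlocks_mul_entry_le {a b : ℕ} {ι κ : Type*} [Fintype ι] [Fintype κ]
    (L : Matrix ι (Fin a ⊕ Fin b) ℝ) (Y : Matrix (Fin a) (Fin a) ℝ)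
    (R : Matrix (Fin a ⊕ Fin b) κ ℝ) (i : ι) (j : κ) :
    |(L * fromBlocks Y 0 0 (0 : Matrix (Fin b) (Fin b) ℝ) * R) i j| ≤
      (∑ p : Fin a, ∑ q : Fin a, |L i (Sum.inl p)| * |R (Sum.inl q) j|) * opNorm Y := by
  rw [mul_fromBlocks_mul_entry, Finset.sum_mul]
  refine (Finset.abs_sum_le_sum_abs _ _).trans (Finset.sum_le_sum fun p _ => ?_)
  rw [Finset.sum_mul]
  refine (Finset.abs_sum_le_sum_abs _ _).trans (Finset.sum_le_sum fun q _ => ?_)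
  rw [abs_mul, abs_mul]
  calc |L i (Sum.inl p)| * |Y p q| * |R (Sum.inl q) j|
      = |L i (Sum.inl p)| * |R (Sum.inl q) j| * |Y p q| := by ring
    _ ≤ |L i (Sum.inl p)| * |R (Sum.inl q) j| * opNorm Y := by
        exact mul_le_mul_of_nonneg_left (abs_entry_le_opNorm Y p q)
          (mul_nonneg (abs_nonneg _) (abs_nonneg _))

lemma continuous_mexp_smul {d : ℕ} (J : Matrix (Fin d) (Fin d) ℝ) :
    Continuous fun s : ℝ => mexp (s • J) := by
  letI := Matrix.frobeniusNormedRing (m := Fin d) (α := ℝ)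
  letI := Matrix.frobeniusNormedAlgebra (m := Fin d) (R := ℝ) (α := ℝ)
  letI := NormedAlgebra.restrictScalars ℚ ℝ (Matrix (Fin d) (Fin d) ℝ)
  exact (NormedSpace.exp_continuous (𝔸 := Matrix (Fin d) (Fin d) ℝ)).comp (continuous_id.smul continuous_const)

lemma sum_dotv_cs {m : ℕ} {ν : ℕ} (e v : ℕ → Fin m × Fin m → ℝ) :
    |∑ k ∈ Finset.range ν, dotv (e k) (v k)| ≤
      Real.sqrt (∑ k ∈ Finset.range ν, enormSq (e k)) *
      Real.sqrt (∑ k ∈ Finset.range ν, enormSq (v k)) := by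
  have h := Finset.sum_mul_sq_le_sq_mul_sq ((Finset.range ν) ×ˢ (Finset.univ : Finset (Fin m × Fin m)))
    (fun kp => e kp.1 kp.2) (fun kp => v kp.1 kp.2)
  rw [Finset.sum_product, Finset.sum_product, Finset.sum_product] at h
  have h1 : (∑ k ∈ Finset.range ν, dotv (e k) (v k)) ^ 2 ≤
      (∑ k ∈ Finset.range ν, enormSq (e k)) * (∑ k ∈ Finset.range ν, enormSq (v k)) := by
    simpa [dotv, enormSq] using h
  have := Real.sqrt_le_sqrt h1
  rwa [Real.sqrt_sq_eq_abs, Real.sqrt_mul (show (0:ℝ) ≤ ∑ k ∈ Finset.range ν, enormSq (e k)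
    from Finset.sum_nonneg fun k _ => Finset.sum_nonneg fun i _ => sq_nonneg _)] at this

lemma integral_sqrt_mul_sqrt_le {s : Set ℝ} {F G : ℝ → ℝ}
    (hF : IntegrableOn F s) (hG : IntegrableOn G s)
    (hFn : ∀ x, 0 ≤ F x) (hGn : ∀ x, 0 ≤ G x) :
    ∫ x in s, Real.sqrt (F x) * Real.sqrt (G x) ≤
      Real.sqrt (∫ x in s, F x) * Real.sqrt (∫ x in s, G x) := by
  have hpq : Real.HolderConjugate 2 2 := Real.HolderConjugate.two_two
  have hFm : AEStronglyMeasurable (fun x => Real.sqrt (F x)) (volume.restrict s) :=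
    Real.continuous_sqrt.comp_aestronglyMeasurable hF.aestronglyMeasurable
  have hGm : AEStronglyMeasurable (fun x => Real.sqrt (G x)) (volume.restrict s) :=
    Real.continuous_sqrt.comp_aestronglyMeasurable hG.aestronglyMeasurable
  have hF2 : MemLp (fun x => Real.sqrt (F x)) (ENNReal.ofReal 2) (volume.restrict s) := by
    rw [show ENNReal.ofReal (2:ℝ) = 2 by norm_num]
    rw [memLp_two_iff_integrable_sq hFm]
    refine hF.congr (Filter.Eventually.of_forall fun x => ?_)
    exact (Real.sq_sqrt (hFn x)).symm
  have hG2 : MemLp (fun x => Real.sqrt (G x)) (ENNReal.ofReal 2) (volume.restrict s) := by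
    rw [show ENNReal.ofReal (2:ℝ) = 2 by norm_num]
    rw [memLp_two_iff_integrable_sq hGm]
    refine hG.congr (Filter.Eventually.of_forall fun x => ?_)
    exact (Real.sq_sqrt (hGn x)).symm
  have h := MeasureTheory.integral_mul_le_Lp_mul_Lq_of_nonneg hpq
    (Filter.Eventually.of_forall fun x => Real.sqrt_nonneg (F x))
    (Filter.Eventually.of_forall fun x => Real.sqrt_nonneg (G x)) hF2 hG2
  have hFr : (∫ x in s, Real.sqrt (F x) ^ (2:ℝ)) = ∫ x in s, F x := by
    refine integral_congr_ae (Filter.Eventually.of_forall fun x => ?_)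
    show Real.sqrt (F x) ^ (2:ℝ) = F x
    rw [Real.rpow_two, Real.sq_sqrt (hFn x)]
  have hGr : (∫ x in s, Real.sqrt (G x) ^ (2:ℝ)) = ∫ x in s, G x := by
    refine integral_congr_ae (Filter.Eventually.of_forall fun x => ?_)
    show Real.sqrt (G x) ^ (2:ℝ) = G x
    rw [Real.rpow_two, Real.sq_sqrt (hGn x)]
  rw [hFr, hGr] at h
  calc ∫ x in s, Real.sqrt (F x) * Real.sqrt (G x)
      ≤ (∫ x in s, F x) ^ (1/2:ℝ) * (∫ x in s, G x) ^ (1/2:ℝ) := h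
    _ = Real.sqrt (∫ x in s, F x) * Real.sqrt (∫ x in s, G x) := by
        rw [Real.sqrt_eq_rpow, Real.sqrt_eq_rpow]

/-- For every `t ≥ 0` the improper-proper output error satisfies
`|y_ip(t) − ŷ_ip(t)| ≤ (∫₀^∞ ∑_{k<ν} ‖h_ip(s,k) − ĥ_ip(s,k)‖₂² ds)^{1/2} ·
  (∫₀ᵗ ∑_{k<ν} ‖u(τ) ⊗ u^{(k)}(t)‖₂² dτ)^{1/2}`. -/
theorem improper_proper_output_error_kernel_bound
    {nf ni m : ℕ} (hm : 0 < m) (ν : ℕ) (hν : 0 < ν)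
    -- Weierstraß canonical form data for the full-order system
    (W T Winv Tinv : Matrix (Fin nf ⊕ Fin ni) (Fin nf ⊕ Fin ni) ℝ)
    (hW : W * Winv = 1) (hW' : Winv * W = 1)
    (hT : T * Tinv = 1) (hT' : Tinv * T = 1)
    (J : Matrix (Fin nf) (Fin nf) ℝ) (N : Matrix (Fin ni) (Fin ni) ℝ) (hN : N ^ ν = 0)
    (C α : ℝ) (hC : 0 < C) (hα : 0 < α)
    (hJ : ∀ t : ℝ, 0 ≤ t → opNorm (mexp (t • J)) ≤ C * Real.exp (-α * t))
    (E A : Matrix (Fin nf ⊕ Fin ni) (Fin nf ⊕ Fin ni) ℝ)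
    (hE : E = W * fromBlocks 1 0 0 N * T)
    (hA : A = W * fromBlocks J 0 0 1 * T)
    (B : Matrix (Fin nf ⊕ Fin ni) (Fin m) ℝ)
    (M : Matrix (Fin nf ⊕ Fin ni) (Fin nf ⊕ Fin ni) ℝ) (hM : M.IsSymm)
    -- spectral projectors
    (Pr Pl : Matrix (Fin nf ⊕ Fin ni) (Fin nf ⊕ Fin ni) ℝ)
    (hPr : Pr = Tinv * fromBlocks 1 0 0 0 * T)
    (hPl : Pl = W * fromBlocks 1 0 0 0 * Winv)
    -- fundamental solution matrices
    (FJ : ℝ → Matrix (Fin nf ⊕ Fin ni) (Fin nf ⊕ Fin ni) ℝ)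
    (hFJ : ∀ t : ℝ, FJ t = Tinv * fromBlocks (mexp (t • J)) 0 0 0 * Winv)
    (FN : ℕ → Matrix (Fin nf ⊕ Fin ni) (Fin nf ⊕ Fin ni) ℝ)
    (hFN : ∀ k : ℕ, FN k = Tinv * fromBlocks 0 0 0 (-(N ^ k)) * Winv)
    -- proper and improper controllability Gramians
    (Pp : Matrix (Fin nf ⊕ Fin ni) (Fin nf ⊕ Fin ni) ℝ)
    (hPp : Pp = matIntIoi fun t => FJ t * B * Bᵀ * (FJ t)ᵀ)
    (Pimp : Matrix (Fin nf ⊕ Fin ni) (Fin nf ⊕ Fin ni) ℝ)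
    (hPimp : Pimp = ∑ k ∈ Finset.range ν, FN k * B * Bᵀ * (FN k)ᵀ)
    -- reduced-order data
    {rf ri : ℕ}
    (A1r : Matrix (Fin rf) (Fin rf) ℝ) (E2r : Matrix (Fin ri) (Fin ri) ℝ) (hE2r : E2r ^ ν = 0)
    (Cr αr : ℝ) (hCr : 0 < Cr) (hαr : 0 < αr)
    (hA1r : ∀ t : ℝ, 0 ≤ t → opNorm (mexp (t • A1r)) ≤ Cr * Real.exp (-αr * t))
    (Br : Matrix (Fin rf ⊕ Fin ri) (Fin m) ℝ)
    (Mr : Matrix (Fin rf ⊕ Fin ri) (Fin rf ⊕ Fin ri) ℝ) (hMr : Mr.IsSymm)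
    (FJr : ℝ → Matrix (Fin rf ⊕ Fin ri) (Fin rf ⊕ Fin ri) ℝ)
    (hFJr : ∀ t : ℝ, FJr t = fromBlocks (mexp (t • A1r)) 0 0 0)
    (FNr : ℕ → Matrix (Fin rf ⊕ Fin ri) (Fin rf ⊕ Fin ri) ℝ)
    (hFNr : ∀ k : ℕ, FNr k = fromBlocks 0 0 0 (-(E2r ^ k)))
    -- improper-proper kernels of the full-order and reduced-order systems
    (hip : ℝ → ℕ → Fin m × Fin m → ℝ)
    (hhip : ∀ (t : ℝ) (k : ℕ), hip t k = vecm (Bᵀ * (FN k)ᵀ * M * FJ t * B))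
    (hipr : ℝ → ℕ → Fin m × Fin m → ℝ)
    (hhipr : ∀ (t : ℝ) (k : ℕ), hipr t k = vecm (Brᵀ * (FNr k)ᵀ * Mr * FJr t * Br))
    -- a (ν−1)-times continuously differentiable input, with u and all derivatives
    -- square-integrable and bounded
    (u : ℝ → Fin m → ℝ) (hu : ContDiff ℝ ((ν - 1 : ℕ) : ℕ∞) u)
    (husq : ∀ k < ν,
      MeasureTheory.IntegrableOn (fun τ => enormSq (iteratedDeriv k u τ)) (Set.Ioi 0))
    (hubd : ∀ k < ν, ∃ c : ℝ, ∀ t : ℝ, 0 ≤ t → Real.sqrt (enormSq (iteratedDeriv k u t)) ≤ c)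
    -- improper-proper outputs of the full-order and reduced-order systems
    (yip yipr : ℝ → ℝ)
    (hyip : ∀ t : ℝ, yip t = ∫ τ in Set.Ioc (0:ℝ) t,
      ∑ k ∈ Finset.range ν, dotv (hip (t - τ) k) (kron (u τ) (iteratedDeriv k u t)))
    (hyipr : ∀ t : ℝ, yipr t = ∫ τ in Set.Ioc (0:ℝ) t,
      ∑ k ∈ Finset.range ν, dotv (hipr (t - τ) k) (kron (u τ) (iteratedDeriv k u t)))
    :
    ∀ t : ℝ, 0 ≤ t → |yip t - yipr t| ≤
      Real.sqrt (∫ s in Set.Ioi (0:ℝ), ∑ k ∈ Finset.range ν, enormSq (hip s k - hipr s k)) *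
      Real.sqrt (∫ τ in Set.Ioc (0:ℝ) t, ∑ k ∈ Finset.range ν,
        enormSq (kron (u τ) (iteratedDeriv k u t))) := by
  intro t ht
  classical
  -- entrywise representation of the kernels
  have hipEq : ∀ (s : ℝ) (k : ℕ) (p : Fin m × Fin m), hip s k p =
      ((Bᵀ * (FN k)ᵀ * M * Tinv) * fromBlocks (mexp (s • J)) 0 0
        (0 : Matrix (Fin ni) (Fin ni) ℝ) * (Winv * B)) p.1 p.2 := by
    intro s k p
    rw [hhip, hFJ]
    have hm : Bᵀ * (FN k)ᵀ * M * (Tinv * fromBlocks (mexp (s • J)) 0 0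
        (0 : Matrix (Fin ni) (Fin ni) ℝ) * Winv) * B =
        (Bᵀ * (FN k)ᵀ * M * Tinv) * fromBlocks (mexp (s • J)) 0 0
        (0 : Matrix (Fin ni) (Fin ni) ℝ) * (Winv * B) := by
      simp only [Matrix.mul_assoc]
    rw [hm]
    rfl
  have hiprEq : ∀ (s : ℝ) (k : ℕ) (p : Fin m × Fin m), hipr s k p =
      ((Brᵀ * (FNr k)ᵀ * Mr) * fromBlocks (mexp (s • A1r)) 0 0
        (0 : Matrix (Fin ri) (Fin ri) ℝ) * Br) p.1 p.2 := by
    intro s k p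
    rw [hhipr, hFJr]
    have hm : Brᵀ * (FNr k)ᵀ * Mr * fromBlocks (mexp (s • A1r)) 0 0
        (0 : Matrix (Fin ri) (Fin ri) ℝ) * Br =
        (Brᵀ * (FNr k)ᵀ * Mr) * fromBlocks (mexp (s • A1r)) 0 0
        (0 : Matrix (Fin ri) (Fin ri) ℝ) * Br := by
      simp only [Matrix.mul_assoc]
    rw [hm]
    rfl
  -- continuity of the kernels
  have hipCont : ∀ (k : ℕ) (p : Fin m × Fin m), Continuous fun s => hip s k p := by
    intro k p
    have h : (fun s => hip s k p) = fun s => ∑ i : Fin nf, ∑ j : Fin nf,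
        (Bᵀ * (FN k)ᵀ * M * Tinv) p.1 (Sum.inl i) * mexp (s • J) i j *
          (Winv * B) (Sum.inl j) p.2 := by
      funext s
      rw [hipEq s k p, mul_fromBlocks_mul_entry]
    rw [h]
    refine continuous_finset_sum _ fun i _ => continuous_finset_sum _ fun j _ => ?_
    exact (continuous_const.mul ((continuous_mexp_smul J).matrix_elem i j)).mul continuous_const
  have hiprCont : ∀ (k : ℕ) (p : Fin m × Fin m), Continuous fun s => hipr s k p := by
    intro k p
    have h : (fun s => hipr s k p) = fun s => ∑ i : Fin rf, ∑ j : Fin rf,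
        (Brᵀ * (FNr k)ᵀ * Mr) p.1 (Sum.inl i) * mexp (s • A1r) i j * Br (Sum.inl j) p.2 := by
      funext s
      rw [hiprEq s k p, mul_fromBlocks_mul_entry]
    rw [h]
    refine continuous_finset_sum _ fun i _ => continuous_finset_sum _ fun j _ => ?_
    exact (continuous_const.mul ((continuous_mexp_smul A1r).matrix_elem i j)).mul continuous_const
  -- exponential bound on the kernel difference
  set β : ℝ := min α αr with hβdef
  have hβ : 0 < β := lt_min hα hαr
  have hdiff : ∀ (k : ℕ) (p : Fin m × Fin m), ∃ Dkp : ℝ, 0 ≤ Dkp ∧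
      ∀ s : ℝ, 0 ≤ s → |hip s k p - hipr s k p| ≤ Dkp * Real.exp (-β * s) := by
    intro k p
    set c1 : ℝ := ∑ i : Fin nf, ∑ j : Fin nf,
      |(Bᵀ * (FN k)ᵀ * M * Tinv) p.1 (Sum.inl i)| * |(Winv * B) (Sum.inl j) p.2| with hc1
    set c2 : ℝ := ∑ i : Fin rf, ∑ j : Fin rf,
      |(Brᵀ * (FNr k)ᵀ * Mr) p.1 (Sum.inl i)| * |Br (Sum.inl j) p.2| with hc2
    have hc1n : 0 ≤ c1 := Finset.sum_nonneg fun i _ => Finset.sum_nonneg fun j _ =>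
      mul_nonneg (abs_nonneg _) (abs_nonneg _)
    have hc2n : 0 ≤ c2 := Finset.sum_nonneg fun i _ => Finset.sum_nonneg fun j _ =>
      mul_nonneg (abs_nonneg _) (abs_nonneg _)
    refine ⟨c1 * C + c2 * Cr, by positivity, fun s hs => ?_⟩
    have e1 : |hip s k p| ≤ c1 * (C * Real.exp (-α * s)) := by
      rw [hipEq s k p]
      exact (abs_mul_fromBlocks_mul_entry_le _ _ _ _ _).trans
        (mul_le_mul_of_nonneg_left (hJ s hs) hc1n)
    have e2 : |hipr s k p| ≤ c2 * (Cr * Real.exp (-αr * s)) := by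
      rw [hiprEq s k p]
      exact (abs_mul_fromBlocks_mul_entry_le _ _ _ _ _).trans
        (mul_le_mul_of_nonneg_left (hA1r s hs) hc2n)
    have eα : Real.exp (-α * s) ≤ Real.exp (-β * s) := by
      apply Real.exp_le_exp.2
      nlinarith [min_le_left α αr]
    have eαr : Real.exp (-αr * s) ≤ Real.exp (-β * s) := by
      apply Real.exp_le_exp.2
      nlinarith [min_le_right α αr]
    calc |hip s k p - hipr s k p| ≤ |hip s k p| + |hipr s k p| := abs_sub _ _
      _ ≤ c1 * (C * Real.exp (-α * s)) + c2 * (Cr * Real.exp (-αr * s)) := add_le_add e1 e2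
      _ ≤ c1 * (C * Real.exp (-β * s)) + c2 * (Cr * Real.exp (-β * s)) := by
          refine add_le_add ?_ ?_
          · exact mul_le_mul_of_nonneg_left (mul_le_mul_of_nonneg_left eα hC.le) hc1n
          · exact mul_le_mul_of_nonneg_left (mul_le_mul_of_nonneg_left eαr hCr.le) hc2n
      _ = (c1 * C + c2 * Cr) * Real.exp (-β * s) := by ring
  choose D hD0 hD using hdiff
  -- the squared kernel difference
  set Fd : ℝ → ℝ := fun s => ∑ k ∈ Finset.range ν, enormSq (hip s k - hipr s k) with hFddef
  have hFdn : ∀ s, 0 ≤ Fd s := fun s =>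
    Finset.sum_nonneg fun k _ => Finset.sum_nonneg fun p _ => sq_nonneg _
  have hFdcont : Continuous Fd := by
    refine continuous_finset_sum _ fun k _ => ?_
    have h : (fun s => enormSq (hip s k - hipr s k)) =
        fun s => ∑ p : Fin m × Fin m, (hip s k p - hipr s k p) ^ 2 := by
      funext s
      simp [enormSq]
    rw [h]
    exact continuous_finset_sum _ fun p _ => ((hipCont k p).sub (hiprCont k p)).pow 2
  have hFdint : IntegrableOn Fd (Set.Ioi (0:ℝ)) := by
    set K : ℝ := ∑ k ∈ Finset.range ν, ∑ p : Fin m × Fin m, (D k p) ^ 2 with hK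
    have hKn : 0 ≤ K := Finset.sum_nonneg fun k _ => Finset.sum_nonneg fun p _ => sq_nonneg _
    have hgi : IntegrableOn (fun s => K * Real.exp (-(2 * β) * s)) (Set.Ioi (0:ℝ)) :=
      (exp_neg_integrableOn_Ioi 0 (by positivity)).const_mul K
    refine Integrable.mono' hgi hFdcont.aestronglyMeasurable ?_
    rw [ae_restrict_iff' measurableSet_Ioi]
    refine Filter.Eventually.of_forall fun s hs => ?_
    have hs0 : (0:ℝ) ≤ s := le_of_lt hs
    rw [Real.norm_eq_abs, abs_of_nonneg (hFdn s)]
    have hterm : ∀ k ∈ Finset.range ν, enormSq (hip s k - hipr s k) ≤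
        (∑ p : Fin m × Fin m, (D k p) ^ 2) * Real.exp (-(2 * β) * s) := by
      intro k _
      rw [Finset.sum_mul]
      refine Finset.sum_le_sum fun p _ => ?_
      have h1 : |hip s k p - hipr s k p| ≤ D k p * Real.exp (-β * s) := hD k p s hs0
      have h2 : (hip s k p - hipr s k p) ^ 2 ≤ (D k p * Real.exp (-β * s)) ^ 2 := by
        rw [← sq_abs]
        exact pow_le_pow_left₀ (abs_nonneg _) h1 2
      have h3 : (D k p * Real.exp (-β * s)) ^ 2 = (D k p) ^ 2 * Real.exp (-(2 * β) * s) := by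
        rw [mul_pow, sq (Real.exp (-β * s)), ← Real.exp_add]
        congr 2
        ring
      calc ((hip s k - hipr s k) p) ^ 2 = (hip s k p - hipr s k p) ^ 2 := rfl
        _ ≤ (D k p * Real.exp (-β * s)) ^ 2 := h2
        _ = (D k p) ^ 2 * Real.exp (-(2 * β) * s) := h3
    calc Fd s ≤ ∑ k ∈ Finset.range ν,
          (∑ p : Fin m × Fin m, (D k p) ^ 2) * Real.exp (-(2 * β) * s) :=
        Finset.sum_le_sum hterm
      _ = K * Real.exp (-(2 * β) * s) := by rw [hK, Finset.sum_mul]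
  -- the input part
  have hucont : Continuous u := hu.continuous
  set Gd : ℝ → ℝ := fun τ => ∑ k ∈ Finset.range ν, enormSq (kron (u τ) (iteratedDeriv k u t))
    with hGddef
  have hGdn : ∀ τ, 0 ≤ Gd τ := fun τ =>
    Finset.sum_nonneg fun k _ => Finset.sum_nonneg fun p _ => sq_nonneg _
  have hGdcont : Continuous Gd := by
    refine continuous_finset_sum _ fun k _ => ?_
    refine continuous_finset_sum _ fun p _ => ?_
    exact (((continuous_apply p.1).comp hucont).mul continuous_const).pow 2
  -- integrands
  set g1 : ℝ → ℝ := fun τ => ∑ k ∈ Finset.range ν,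
    dotv (hip (t - τ) k) (kron (u τ) (iteratedDeriv k u t)) with hg1def
  set g2 : ℝ → ℝ := fun τ => ∑ k ∈ Finset.range ν,
    dotv (hipr (t - τ) k) (kron (u τ) (iteratedDeriv k u t)) with hg2def
  have hg1cont : Continuous g1 := by
    refine continuous_finset_sum _ fun k _ => continuous_finset_sum _ fun p _ => ?_
    exact (((hipCont k p).comp (continuous_const.sub continuous_id)).mul
      (((continuous_apply p.1).comp hucont).mul continuous_const))
  have hg2cont : Continuous g2 := by
    refine continuous_finset_sum _ fun k _ => continuous_finset_sum _ fun p _ => ?_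
    exact (((hiprCont k p).comp (continuous_const.sub continuous_id)).mul
      (((continuous_apply p.1).comp hucont).mul continuous_const))
  have hFtcont : Continuous fun τ => Fd (t - τ) :=
    hFdcont.comp (continuous_const.sub continuous_id)
  -- main estimate
  have hyy : yip t - yipr t = ∫ τ in Set.Ioc (0:ℝ) t, (g1 τ - g2 τ) := by
    rw [hyip t, hyipr t, integral_sub hg1cont.integrableOn_Ioc hg2cont.integrableOn_Ioc]
  rw [hyy]
  calc |∫ τ in Set.Ioc (0:ℝ) t, (g1 τ - g2 τ)|
      ≤ ∫ τ in Set.Ioc (0:ℝ) t, Real.sqrt (Fd (t - τ)) * Real.sqrt (Gd τ) := by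
        rw [← Real.norm_eq_abs]
        refine norm_integral_le_of_norm_le
          ((hFtcont.sqrt.mul hGdcont.sqrt).integrableOn_Ioc)
          (Filter.Eventually.of_forall fun τ => ?_)
        rw [Real.norm_eq_abs]
        have hsplit : g1 τ - g2 τ = ∑ k ∈ Finset.range ν,
            dotv (hip (t - τ) k - hipr (t - τ) k) (kron (u τ) (iteratedDeriv k u t)) := by
          rw [hg1def, hg2def]
          simp only [← Finset.sum_sub_distrib]
          refine Finset.sum_congr rfl fun k _ => ?_
          simp [dotv, sub_mul, Finset.sum_sub_distrib]
        rw [hsplit]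
        exact sum_dotv_cs _ _
    _ ≤ Real.sqrt (∫ τ in Set.Ioc (0:ℝ) t, Fd (t - τ)) *
          Real.sqrt (∫ τ in Set.Ioc (0:ℝ) t, Gd τ) :=
        integral_sqrt_mul_sqrt_le hFtcont.integrableOn_Ioc hGdcont.integrableOn_Ioc
          (fun τ => hFdn _) hGdn
    _ ≤ Real.sqrt (∫ s in Set.Ioi (0:ℝ), Fd s) * Real.sqrt (∫ τ in Set.Ioc (0:ℝ) t, Gd τ) := by
        refine mul_le_mul_of_nonneg_right (Real.sqrt_le_sqrt ?_) (Real.sqrt_nonneg _)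
        have hswap : (∫ τ in Set.Ioc (0:ℝ) t, Fd (t - τ)) = ∫ s in Set.Ioc (0:ℝ) t, Fd s := by
          rw [← intervalIntegral.integral_of_le ht, ← intervalIntegral.integral_of_le ht,
            intervalIntegral.integral_comp_sub_left Fd t]
          norm_num
        rw [hswap]
        exact setIntegral_mono_set hFdint
          (Filter.Eventually.of_forall fun s => hFdn s)
          (HasSubset.Subset.eventuallyLE Set.Ioc_subset_Ioi_self)
end
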